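/- arXiv:1702.04898 — 2 statements merged into one kernel-verified Lean document; each statement's English description precedes it below -/
import Mathlib

section
/- Let p ≥ 5 be a prime and let G = ⟨a,b,c | [c,a], [c,b]⟩ be the class-2 exponent-p group on three generators with relations [c,a] = [c,b] = 1 (group 4.3.1, of order p^4). Then the number of conjugacy classes of G is p^3 + p^2 − p, and the automorphism group of G has order (p − 1)(p^2 − 1)(p^2 − p)p^5. -/
/-- The commutator `u⁻¹v⁻¹uv`. -/
def fgComm {α : Type} (u v : FreeGroup α) : FreeGroup α := u⁻¹ * v⁻¹ * u * v

/-- The relator set for the largest class-2 exponent-`p` group on `n` generators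
satisfying the extra relations `R`: we add all `p`-th powers and all triple commutators. -/
def classTwoRels (p n : ℕ) (R : Set (FreeGroup (Fin n))) : Set (FreeGroup (Fin n)) :=
  R ∪ (Set.range fun w : FreeGroup (Fin n) => w ^ p) ∪
    {x | ∃ u v w : FreeGroup (Fin n), x = fgComm (fgComm u v) w}

/-- The largest class-2 exponent-`p` group on `n` generators satisfying the relations `R`. -/
def ClassTwoGroup (p n : ℕ) (R : Set (FreeGroup (Fin n))) : Type :=
  PresentedGroup (classTwoRels p n R)

instance (p n : ℕ) (R : Set (FreeGroup (Fin n))) : Group (ClassTwoGroup p n R) := by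
  unfold ClassTwoGroup; infer_instance

/-- `H` is a class-3 descendant of `G` of order `p^9` with exponent `p`. -/
def IsClass3Descendant (p : ℕ) (G : Type) [Group G] (H : Type) [Group H] : Prop :=
  Nat.card H = p ^ 9 ∧ Monoid.exponent H = p ∧
    (⊤ : Subgroup H).lowerCentralSeries 3 = ⊥ ∧ (⊤ : Subgroup H).lowerCentralSeries 2 ≠ ⊥ ∧
    Nonempty ((H ⧸ (⊤ : Subgroup H).lowerCentralSeries 2) ≃* G)

/-- The multiplication underlying a group structure. -/
def mulOfGroup {α : Type} (g : Group α) : Mul α := by letI := g; infer_instance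

/-- `P` has exactly `k` isomorphism classes of groups satisfying it. -/
def IsIsoClassCount (P : (H : Type) → Group H → Prop) (k : ℕ) : Prop :=
  ∃ (H : Fin k → Type) (inst : (i : Fin k) → Group (H i)),
    (∀ i, P (H i) (inst i)) ∧
    (∀ i j : Fin k, i ≠ j →
      ¬ Nonempty (@MulEquiv (H i) (H j) (mulOfGroup (inst i)) (mulOfGroup (inst j)))) ∧
    (∀ (K : Type) (instK : Group K), P K instK →
      ∃ i, Nonempty (@MulEquiv K (H i) (mulOfGroup instK) (mulOfGroup (inst i))))

/-- `G` has exactly `k` class-3 descendants of order `p^9` with exponent `p`,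
up to isomorphism. -/
def DescendantCount (p : ℕ) (G : Type) [Group G] (k : ℕ) : Prop :=
  IsIsoClassCount (fun H inst => @IsClass3Descendant p G _ H inst) k

section Model
variable (p : ℕ)

@[ext] structure Md (p : ℕ) where
  x : ZMod p
  y : ZMod p
  z : ZMod p
  w : ZMod p

namespace Md
variable {p}

instance : Mul (Md p) := ⟨fun g h => ⟨g.x + h.x, g.y + h.y, g.z + h.z, g.w + h.w + g.x * h.y⟩⟩
instance : One (Md p) := ⟨⟨0,0,0,0⟩⟩
instance : Inv (Md p) := ⟨fun g => ⟨-g.x, -g.y, -g.z, -g.w + g.x * g.y⟩⟩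

@[simp] lemma mul_x (g h : Md p) : (g*h).x = g.x + h.x := rfl
@[simp] lemma mul_y (g h : Md p) : (g*h).y = g.y + h.y := rfl
@[simp] lemma mul_z (g h : Md p) : (g*h).z = g.z + h.z := rfl
@[simp] lemma mul_w (g h : Md p) : (g*h).w = g.w + h.w + g.x * h.y := rfl
@[simp] lemma one_x : (1 : Md p).x = 0 := rfl
@[simp] lemma one_y : (1 : Md p).y = 0 := rfl
@[simp] lemma one_z : (1 : Md p).z = 0 := rfl
@[simp] lemma one_w : (1 : Md p).w = 0 := rfl
@[simp] lemma inv_x (g : Md p) : (g⁻¹).x = -g.x := rfl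
@[simp] lemma inv_y (g : Md p) : (g⁻¹).y = -g.y := rfl
@[simp] lemma inv_z (g : Md p) : (g⁻¹).z = -g.z := rfl
@[simp] lemma inv_w (g : Md p) : (g⁻¹).w = -g.w + g.x * g.y := rfl

instance : Group (Md p) :=
  Group.ofLeftAxioms
    (fun a b c => by ext <;> simp <;> ring)
    (fun a => by ext <;> simp)
    (fun a => by ext <;> simp <;> ring)

def A : Md p := ⟨1,0,0,0⟩
def B : Md p := ⟨0,1,0,0⟩
def C : Md p := ⟨0,0,1,0⟩
def T : Md p := ⟨0,0,0,1⟩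

def cd : Md p ≃ (ZMod p) × (ZMod p) × (ZMod p) × (ZMod p) where
  toFun g := (g.x, g.y, g.z, g.w)
  invFun v := ⟨v.1, v.2.1, v.2.2.1, v.2.2.2⟩
  left_inv g := rfl
  right_inv v := rfl

lemma card_Md [NeZero p] : Nat.card (Md p) = p ^ 4 := by
  have := Nat.card_congr (cd (p := p))
  simp [this, Nat.card_eq_fintype_card, ZMod.card]; ring

instance [NeZero p] : Finite (Md p) := Finite.of_equiv _ (cd (p := p)).symm

end Md
end Model

namespace Md
variable {p : ℕ}

lemma pow_formula (g : Md p) (n : ℕ) :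
    g ^ n = ⟨n * g.x, n * g.y, n * g.z, n * g.w + (n.choose 2 : ℕ) * (g.x * g.y)⟩ := by
  induction n with
  | zero => ext <;> simp
  | succ n ih =>
    rw [pow_succ, ih]
    have h2 : (n+1).choose 2 = n.choose 2 + n := by
      rw [Nat.choose_succ_succ]
      simp [Nat.choose_one_right, Nat.add_comm]
    ext <;> simp [h2] <;> push_cast <;> ring

lemma pow_p (hp : p.Prime) (hodd : p ≠ 2) (g : Md p) : g ^ p = 1 := by
  have h1 : ((p : ℕ) : ZMod p) = 0 := ZMod.natCast_self p
  have h2 : ((p.choose 2 : ℕ) : ZMod p) = 0 := by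
    rw [ZMod.natCast_eq_zero_iff]
    exact hp.dvd_choose_self (by norm_num) (by have := hp.two_le; omega)
  rw [pow_formula]
  ext <;> simp [h1, h2]

lemma conj_formula (k g : Md p) :
    k * g * k⁻¹ = ⟨g.x, g.y, g.z, g.w + k.x * g.y - k.y * g.x⟩ := by
  ext <;> simp <;> ring

lemma comm_formula (g h : Md p) :
    g⁻¹ * h⁻¹ * g * h = ⟨0, 0, 0, g.x * h.y - g.y * h.x⟩ := by
  ext <;> simp <;> ring

lemma comm_central (g h k : Md p) :
    (g⁻¹ * h⁻¹ * g * h) * k = k * (g⁻¹ * h⁻¹ * g * h) := by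
  rw [comm_formula]; ext <;> simp <;> ring

@[simp] lemma A_pow (n : ℕ) : (A : Md p) ^ n = ⟨n, 0, 0, 0⟩ := by
  rw [pow_formula]; ext <;> simp [A]
@[simp] lemma B_pow (n : ℕ) : (B : Md p) ^ n = ⟨0, n, 0, 0⟩ := by
  rw [pow_formula]; ext <;> simp [B]
@[simp] lemma C_pow (n : ℕ) : (C : Md p) ^ n = ⟨0, 0, n, 0⟩ := by
  rw [pow_formula]; ext <;> simp [C]
@[simp] lemma T_pow (n : ℕ) : (T : Md p) ^ n = ⟨0, 0, 0, n⟩ := by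
  rw [pow_formula]; ext <;> simp [T]

lemma T_eq_comm : (T : Md p) = A⁻¹ * B⁻¹ * A * B := by
  rw [comm_formula]; ext <;> simp [A, B, T]

lemma decomp [NeZero p] (g : Md p) :
    g = B ^ (g.y.val) * A ^ (g.x.val) * C ^ (g.z.val) * T ^ (g.w.val) := by
  simp only [A_pow, B_pow, C_pow, T_pow]
  have h : ∀ a : ZMod p, ((a.val : ℕ) : ZMod p) = a := fun a => by
    simp [ZMod.natCast_val, ZMod.cast_id]
  ext <;> simp [h] <;> ring

lemma closure_gens [NeZero p] : Subgroup.closure ({A, B, C} : Set (Md p)) = ⊤ := by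
  rw [eq_top_iff]
  intro g _
  have hA : (A : Md p) ∈ Subgroup.closure ({A, B, C} : Set (Md p)) :=
    Subgroup.subset_closure (by simp)
  have hB : (B : Md p) ∈ Subgroup.closure ({A, B, C} : Set (Md p)) :=
    Subgroup.subset_closure (by simp)
  have hC : (C : Md p) ∈ Subgroup.closure ({A, B, C} : Set (Md p)) :=
    Subgroup.subset_closure (by simp)
  have hT : (T : Md p) ∈ Subgroup.closure ({A, B, C} : Set (Md p)) := by
    rw [T_eq_comm]
    exact Subgroup.mul_mem _ (Subgroup.mul_mem _ (Subgroup.mul_mem _ (Subgroup.inv_mem _ hA) (Subgroup.inv_mem _ hB)) hA) hB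
  rw [decomp g]
  exact Subgroup.mul_mem _ (Subgroup.mul_mem _ (Subgroup.mul_mem _ (Subgroup.pow_mem _ hB _) (Subgroup.pow_mem _ hA _)) (Subgroup.pow_mem _ hC _)) (Subgroup.pow_mem _ hT _)

end Md





section PG
variable {p n : ℕ} {R : Set (FreeGroup (Fin n))}

namespace CTG

def mkG : FreeGroup (Fin n) →* ClassTwoGroup p n R := PresentedGroup.mk _

lemma mkG_surjective : Function.Surjective (mkG : FreeGroup (Fin n) →* ClassTwoGroup p n R) :=
  PresentedGroup.mk_surjective _

lemma mk_rel_one {r : FreeGroup (Fin n)} (hr : r ∈ classTwoRels p n R) :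
    (mkG r : ClassTwoGroup p n R) = 1 :=
  (QuotientGroup.eq_one_iff _).mpr (Subgroup.subset_normalClosure hr)

lemma pow_p_eq_one (g : ClassTwoGroup p n R) : g ^ p = 1 := by
  obtain ⟨w, rfl⟩ := mkG_surjective g
  rw [← map_pow]
  exact mk_rel_one (Or.inl (Or.inr ⟨w, rfl⟩))

lemma comm_one {G : Type*} [Group G] {a b : G} (h : a⁻¹ * b⁻¹ * a * b = 1) :
    a * b = b * a := by
  have h2 : b * a * (a⁻¹ * b⁻¹ * a * b) = b * a * 1 := by rw [h]
  simpa [mul_assoc] using h2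

lemma comm_central (g h k : ClassTwoGroup p n R) :
    (g⁻¹ * h⁻¹ * g * h) * k = k * (g⁻¹ * h⁻¹ * g * h) := by
  obtain ⟨u, rfl⟩ := mkG_surjective g
  obtain ⟨v, rfl⟩ := mkG_surjective h
  obtain ⟨w, rfl⟩ := mkG_surjective k
  have h1 : (mkG (fgComm (fgComm u v) w) : ClassTwoGroup p n R) = 1 :=
    mk_rel_one (Or.inr ⟨u, v, w, rfl⟩)
  have h2 : (mkG (fgComm (fgComm u v) w) : ClassTwoGroup p n R) =
      ((mkG u)⁻¹ * (mkG v)⁻¹ * mkG u * mkG v)⁻¹ * (mkG w)⁻¹ *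
        ((mkG u)⁻¹ * (mkG v)⁻¹ * mkG u * mkG v) * mkG w := by
    simp [fgComm, mul_assoc]
  rw [h2] at h1
  exact comm_one h1

end CTG
end PG

section Iso
open CTG

abbrev Rspec : Set (FreeGroup (Fin 3)) :=
  {fgComm (FreeGroup.of (2 : Fin 3)) (FreeGroup.of (0 : Fin 3)),
   fgComm (FreeGroup.of (2 : Fin 3)) (FreeGroup.of (1 : Fin 3))}

variable {p : ℕ}

abbrev Gp (p : ℕ) : Type := ClassTwoGroup p 3 Rspec

namespace Gp

def g0 : Gp p := PresentedGroup.of 0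
def g1 : Gp p := PresentedGroup.of 1
def g2 : Gp p := PresentedGroup.of 2
def t : Gp p := g0⁻¹ * g1⁻¹ * g0 * g1

lemma of_eq_mk (i : Fin 3) : (PresentedGroup.of i : Gp p) = mkG (FreeGroup.of i) := rfl

lemma rel1 : (g2 : Gp p)⁻¹ * g0⁻¹ * g2 * g0 = 1 := by
  have : (mkG (fgComm (FreeGroup.of (2 : Fin 3)) (FreeGroup.of (0 : Fin 3))) : Gp p) = 1 :=
    mk_rel_one (Or.inl (Or.inl (by left; rfl)))
  simpa [fgComm, g0, g2, of_eq_mk, mul_assoc] using this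

lemma rel2 : (g2 : Gp p)⁻¹ * g1⁻¹ * g2 * g1 = 1 := by
  have : (mkG (fgComm (FreeGroup.of (2 : Fin 3)) (FreeGroup.of (1 : Fin 3))) : Gp p) = 1 :=
    mk_rel_one (Or.inl (Or.inl (by right; rfl)))
  simpa [fgComm, g1, g2, of_eq_mk, mul_assoc] using this

lemma g2_central (k : Gp p) : g2 * k = k * g2 := by
  have h : k ∈ Subgroup.centralizer ({g2} : Set (Gp p)) := by
    apply PresentedGroup.generated_by
    intro j
    refine (Subgroup.mem_centralizer_iff (G := Gp p)).mpr ?_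
    intro x hx
    rw [Set.mem_singleton_iff] at hx
    subst hx
    have hj : ∀ j : Fin 3, j = 0 ∨ j = 1 ∨ j = 2 := by decide
    rcases hj j with rfl | rfl | rfl
    · exact comm_one rel1
    · exact comm_one rel2
    · rfl
  exact (Subgroup.mem_centralizer_iff.mp h) g2 (by simp)

lemma t_central (k : Gp p) : t * k = k * t := comm_central g0 g1 k

lemma tpow_central (m : ℕ) (x : Gp p) : t ^ m * x = x * t ^ m := by
  induction m with
  | zero => simp
  | succ m ihm => rw [pow_succ, mul_assoc, t_central, ← mul_assoc, ihm, mul_assoc]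

lemma g2pow_central (m : ℕ) (x : Gp p) : g2 ^ m * x = x * g2 ^ m := by
  induction m with
  | zero => simp
  | succ m ihm => rw [pow_succ, mul_assoc, g2_central, ← mul_assoc, ihm, mul_assoc]

lemma g0_mul_g1 : (g0 : Gp p) * g1 = g1 * g0 * t := by
  show (g0 : Gp p) * g1 = g1 * g0 * (g0⁻¹ * g1⁻¹ * g0 * g1)
  group

lemma g0_mul_g1_pow (b : ℕ) : (g0 : Gp p) * g1 ^ b = g1 ^ b * g0 * t ^ b := by
  induction b with
  | zero => simp
  | succ b ih =>
    calc (g0 : Gp p) * g1 ^ (b+1) = (g0 * g1 ^ b) * g1 := by rw [pow_succ]; group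
      _ = (g1 ^ b * g0 * t ^ b) * g1 := by rw [ih]
      _ = g1 ^ b * g0 * (t ^ b * g1) := by group
      _ = g1 ^ b * g0 * (g1 * t ^ b) := by rw [tpow_central]
      _ = g1 ^ b * (g0 * g1) * t ^ b := by group
      _ = g1 ^ b * (g1 * g0 * t) * t ^ b := by rw [g0_mul_g1]
      _ = g1 ^ (b+1) * g0 * (t * t ^ b) := by rw [pow_succ]; group
      _ = g1 ^ (b+1) * g0 * t ^ (b+1) := by rw [← pow_succ']

lemma g0_pow_mul_g1_pow (a b : ℕ) :
    (g0 : Gp p) ^ a * g1 ^ b = g1 ^ b * g0 ^ a * t ^ (a * b) := by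
  induction a with
  | zero => simp
  | succ a ih =>
    calc (g0 : Gp p) ^ (a+1) * g1 ^ b = g0 ^ a * (g0 * g1 ^ b) := by rw [pow_succ]; group
      _ = g0 ^ a * (g1 ^ b * g0 * t ^ b) := by rw [g0_mul_g1_pow]
      _ = (g0 ^ a * g1 ^ b) * (g0 * t ^ b) := by group
      _ = (g1 ^ b * g0 ^ a * t ^ (a*b)) * (g0 * t ^ b) := by rw [ih]
      _ = g1 ^ b * g0 ^ a * (t ^ (a*b) * g0) * t ^ b := by group
      _ = g1 ^ b * g0 ^ a * (g0 * t ^ (a*b)) * t ^ b := by rw [tpow_central]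
      _ = g1 ^ b * g0 ^ (a+1) * (t ^ (a*b) * t ^ b) := by rw [pow_succ]; group
      _ = g1 ^ b * g0 ^ (a+1) * t ^ ((a+1)*b) := by
          rw [← pow_add, show a*b + b = (a+1)*b from by ring]

lemma Fkey (a b c d a' b' c' d' : ℕ) :
    (g1 ^ b * g0 ^ a * g2 ^ c * t ^ d : Gp p) * (g1 ^ b' * g0 ^ a' * g2 ^ c' * t ^ d')
    = g1 ^ (b+b') * g0 ^ (a+a') * g2 ^ (c+c') * t ^ ((d+d') + a * b') := by
  calc (g1 ^ b * g0 ^ a * g2 ^ c * t ^ d : Gp p) * (g1 ^ b' * g0 ^ a' * g2 ^ c' * t ^ d')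
      = g1 ^ b * g0 ^ a * g2 ^ c * (t ^ d * (g1 ^ b' * (g0 ^ a' * (g2 ^ c' * t ^ d')))) := by
        group
    _ = g1 ^ b * g0 ^ a * g2 ^ c * ((g1 ^ b' * (g0 ^ a' * (g2 ^ c' * t ^ d'))) * t ^ d) := by
        rw [tpow_central d]
    _ = g1 ^ b * g0 ^ a * (g2 ^ c * (g1 ^ b' * (g0 ^ a' * (g2 ^ c' * (t ^ d' * t ^ d))))) := by
        group
    _ = g1 ^ b * g0 ^ a * ((g1 ^ b' * (g0 ^ a' * (g2 ^ c' * (t ^ d' * t ^ d)))) * g2 ^ c) := by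
        rw [g2pow_central c]
    _ = g1 ^ b * ((g0 ^ a * g1 ^ b') * (g0 ^ a' * (g2 ^ c' * (t ^ d' * (t ^ d * g2 ^ c))))) := by
        group
    _ = g1 ^ b * ((g1 ^ b' * g0 ^ a * t ^ (a * b'))
          * (g0 ^ a' * (g2 ^ c' * (t ^ d' * (t ^ d * g2 ^ c))))) := by
        rw [g0_pow_mul_g1_pow a b']
    _ = g1 ^ b * (g1 ^ b' * (g0 ^ a * (t ^ (a * b')
          * (g0 ^ a' * (g2 ^ c' * (t ^ d' * (t ^ d * g2 ^ c))))))) := by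
        group
    _ = g1 ^ b * (g1 ^ b' * (g0 ^ a * ((g0 ^ a' * (g2 ^ c' * (t ^ d' * (t ^ d * g2 ^ c))))
          * t ^ (a * b')))) := by
        rw [tpow_central (a * b')]
    _ = g1 ^ b * (g1 ^ b' * (g0 ^ a * (g0 ^ a' * (g2 ^ c' * (((t ^ d' * t ^ d) * g2 ^ c)
          * t ^ (a * b')))))) := by
        group
    _ = g1 ^ b * (g1 ^ b' * (g0 ^ a * (g0 ^ a' * (g2 ^ c' * ((g2 ^ c * (t ^ d' * t ^ d))
          * t ^ (a * b')))))) := by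
        rw [← g2pow_central c (t ^ d' * t ^ d)]
    _ = g1 ^ (b+b') * g0 ^ (a+a') * g2 ^ (c+c') * t ^ ((d+d') + a * b') := by
        group

lemma hexp (hp : p.Prime) (g : Gp p) {m n : ℕ} (h : (m : ZMod p) = n) : g ^ m = g ^ n := by
  have hmod : m ≡ n [MOD p] := (ZMod.natCast_eq_natCast_iff m n p).mp h
  have hdvd : orderOf g ∣ p := orderOf_dvd_of_pow_eq_one (pow_p_eq_one g)
  exact pow_eq_pow_iff_modEq.mpr (hmod.of_dvd hdvd)

/-- the candidate inverse map -/
def F (m : Md p) : Gp p :=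
  g1 ^ (m.y.val) * g0 ^ (m.x.val) * g2 ^ (m.z.val) * t ^ (m.w.val)

lemma val_cast (a : ZMod p) [NeZero p] : ((a.val : ℕ) : ZMod p) = a := by
  simp [ZMod.natCast_val, ZMod.cast_id]

lemma F_mul (hp : p.Prime) (g h : Md p) : F (g * h) = F g * F h := by
  haveI : NeZero p := ⟨hp.pos.ne'⟩
  have e1 : (((g*h).x.val : ℕ) : ZMod p) = ((g.x.val + h.x.val : ℕ) : ZMod p) := by
    push_cast [val_cast]; rw [Md.mul_x]
  have e2 : (((g*h).y.val : ℕ) : ZMod p) = ((g.y.val + h.y.val : ℕ) : ZMod p) := by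
    push_cast [val_cast]; rw [Md.mul_y]
  have e3 : (((g*h).z.val : ℕ) : ZMod p) = ((g.z.val + h.z.val : ℕ) : ZMod p) := by
    push_cast [val_cast]; rw [Md.mul_z]
  have e4 : (((g*h).w.val : ℕ) : ZMod p)
      = (((g.w.val + h.w.val) + g.x.val * h.y.val : ℕ) : ZMod p) := by
    push_cast [val_cast]; rw [Md.mul_w]
  rw [F, F, F, Fkey, hexp hp g1 e2, hexp hp g0 e1, hexp hp g2 e3, hexp hp t e4]

def Fhom (hp : p.Prime) : Md p →* Gp p := MonoidHom.mk' F (fun g h => F_mul hp g h)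

lemma Fhom_A (hp : p.Prime) : Fhom hp (Md.A : Md p) = g0 := by
  haveI : Fact (1 < p) := ⟨hp.one_lt⟩
  show F (Md.A : Md p) = g0
  rw [F]
  simp [Md.A, ZMod.val_one, ZMod.val_zero]

lemma Fhom_B (hp : p.Prime) : Fhom hp (Md.B : Md p) = g1 := by
  haveI : Fact (1 < p) := ⟨hp.one_lt⟩
  show F (Md.B : Md p) = g1
  rw [F]
  simp [Md.B, ZMod.val_one, ZMod.val_zero]

lemma Fhom_C (hp : p.Prime) : Fhom hp (Md.C : Md p) = g2 := by
  haveI : Fact (1 < p) := ⟨hp.one_lt⟩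
  show F (Md.C : Md p) = g2
  rw [F]
  simp [Md.C, ZMod.val_one, ZMod.val_zero]

lemma Fhom_surjective (hp : p.Prime) : Function.Surjective (Fhom (p := p) hp) := by
  intro x
  have hx : x ∈ (Fhom (p := p) hp).range := by
    apply PresentedGroup.generated_by
    intro j
    have hj : ∀ j : Fin 3, j = 0 ∨ j = 1 ∨ j = 2 := by decide
    rcases hj j with rfl | rfl | rfl
    · exact ⟨Md.A, Fhom_A hp⟩
    · exact ⟨Md.B, Fhom_B hp⟩
    · exact ⟨Md.C, Fhom_C hp⟩
  exact hx

def fM : Fin 3 → Md p := ![Md.A, Md.B, Md.C]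

lemma hrels (hp : p.Prime) (h5 : 5 ≤ p) :
    ∀ r ∈ classTwoRels p 3 Rspec, FreeGroup.lift (fM (p := p)) r = 1 := by
  intro r hr
  rcases hr with (hR | ⟨w, rfl⟩) | ⟨u, v, w, rfl⟩
  · rcases hR with rfl | rfl <;>
    · simp only [fgComm, map_mul, map_inv, FreeGroup.lift_apply_of]
      ext <;> simp [fM, Md.A, Md.B, Md.C] <;> ring
  · rw [map_pow]
    exact Md.pow_p hp (by omega) _
  · simp only [fgComm, map_mul, map_inv]
    ext <;> simp <;> ring

noncomputable def phi (hp : p.Prime) (h5 : 5 ≤ p) : Gp p →* Md p :=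
  PresentedGroup.toGroup (hrels hp h5)

lemma phi_g0 (hp : p.Prime) (h5 : 5 ≤ p) : phi hp h5 (g0 : Gp p) = Md.A :=
  PresentedGroup.toGroup.of _
lemma phi_g1 (hp : p.Prime) (h5 : 5 ≤ p) : phi hp h5 (g1 : Gp p) = Md.B :=
  PresentedGroup.toGroup.of _
lemma phi_g2 (hp : p.Prime) (h5 : 5 ≤ p) : phi hp h5 (g2 : Gp p) = Md.C :=
  PresentedGroup.toGroup.of _

lemma phi_t (hp : p.Prime) (h5 : 5 ≤ p) : phi hp h5 (t : Gp p) = Md.T := by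
  rw [t, Md.T_eq_comm]
  simp [map_mul, map_inv, phi_g0 hp h5, phi_g1 hp h5]

lemma phi_F (hp : p.Prime) (h5 : 5 ≤ p) (m : Md p) : phi hp h5 (F m) = m := by
  haveI : NeZero p := ⟨hp.pos.ne'⟩
  rw [F]
  simp only [map_mul, map_pow, phi_g0 hp h5, phi_g1 hp h5, phi_g2 hp h5, phi_t hp h5]
  exact (Md.decomp m).symm

noncomputable def isoG (hp : p.Prime) (h5 : 5 ≤ p) : Gp p ≃* Md p where
  toFun := phi hp h5
  invFun := F
  left_inv := by
    intro g
    obtain ⟨m, rfl⟩ := Fhom_surjective hp g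
    show F (phi hp h5 (F m)) = F m
    rw [phi_F hp h5]
  right_inv := phi_F hp h5
  map_mul' := map_mul _

end Gp
end Iso

section Conj
namespace Md
variable {p : ℕ}

abbrev TT (p : ℕ) : Type :=
  ({v : ZMod p × ZMod p // v ≠ 0} × ZMod p) ⊕ (ZMod p × ZMod p)

def cinv (g : Md p) : TT p :=
  if h : (g.x, g.y) = (0 : ZMod p × ZMod p) then Sum.inr (g.z, g.w)
  else Sum.inl (⟨(g.x, g.y), h⟩, g.z)

lemma isConj_iff_cinv (hp : p.Prime) (g h : Md p) : IsConj g h ↔ cinv g = cinv h := by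
  haveI : Fact p.Prime := ⟨hp⟩
  constructor
  · rintro hc
    obtain ⟨k, hk⟩ := isConj_iff.mp hc
    rw [conj_formula] at hk
    subst hk
    by_cases h0 : (g.x, g.y) = (0 : ZMod p × ZMod p)
    · have hx : g.x = 0 := congrArg Prod.fst h0
      have hy : g.y = 0 := congrArg Prod.snd h0
      simp only [cinv, hx, hy]
      norm_num
    · simp only [cinv]
      rw [dif_neg h0, dif_neg (by simpa using h0)]
  · intro hc
    by_cases h0 : (g.x, g.y) = (0 : ZMod p × ZMod p)
    · by_cases h1 : (h.x, h.y) = (0 : ZMod p × ZMod p)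
      · simp only [cinv, dif_pos h0, dif_pos h1] at hc
        have : g = h := by
          ext
          · exact (congrArg Prod.fst h0).trans (congrArg Prod.fst h1).symm
          · exact (congrArg Prod.snd h0).trans (congrArg Prod.snd h1).symm
          · exact congrArg Prod.fst (Sum.inr.inj hc)
          · exact congrArg Prod.snd (Sum.inr.inj hc)
        rw [this]
      · unfold cinv at hc
        rw [dif_pos h0, dif_neg h1] at hc
        simp at hc
    · by_cases h1 : (h.x, h.y) = (0 : ZMod p × ZMod p)
      · unfold cinv at hc
        rw [dif_neg h0, dif_pos h1] at hc
        simp at hc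
      · simp only [cinv, dif_neg h0, dif_neg h1] at hc
        have h2 := Sum.inl.inj hc
        have hfst := congrArg Prod.fst h2
        have hz : g.z = h.z := congrArg Prod.snd h2
        have hxy : (g.x, g.y) = (h.x, h.y) := congrArg Subtype.val hfst
        have hx : g.x = h.x := congrArg Prod.fst hxy
        have hy : g.y = h.y := congrArg Prod.snd hxy
        rw [isConj_iff]
        have hne : g.x ≠ 0 ∨ g.y ≠ 0 := by
          by_contra hh
          push_neg at hh
          exact h0 (by simp [hh.1, hh.2])
        rcases hne with hgx | hgy
        · have hhx : h.x ≠ 0 := hx ▸ hgx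
          refine ⟨⟨0, -(h.w - g.w) / g.x, 0, 0⟩, ?_⟩
          rw [conj_formula]
          ext <;> simp [hx, hy, hz]
          rw [div_mul_cancel₀ _ hhx]
          ring
        · have hhy : h.y ≠ 0 := hy ▸ hgy
          refine ⟨⟨(h.w - g.w) / g.y, 0, 0, 0⟩, ?_⟩
          rw [conj_formula]
          ext <;> simp [hx, hy, hz]
          rw [div_mul_cancel₀ _ hhy]
          ring

lemma cinv_surjective (g : ZMod p → True) : Function.Surjective (cinv (p := p)) := by
  rintro (⟨⟨⟨vx, vy⟩, hv⟩, z⟩ | ⟨z, w⟩)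
  · refine ⟨⟨vx, vy, z, 0⟩, ?_⟩
    simp only [cinv]
    rw [dif_neg (by simpa using hv)]
  · exact ⟨⟨0, 0, z, w⟩, by simp [cinv]⟩

noncomputable def conjEquiv (hp : p.Prime) : ConjClasses (Md p) ≃ TT p := by
  refine Equiv.ofBijective
    (fun c => Quotient.liftOn c cinv (fun a b hab => (isConj_iff_cinv hp a b).mp hab)) ⟨?_, ?_⟩
  · intro c d
    refine Quotient.inductionOn₂ c d ?_
    intro a b hab
    exact Quotient.sound ((isConj_iff_cinv hp a b).mpr hab)
  · intro v
    obtain ⟨g, hg⟩ := cinv_surjective (fun _ => trivial) v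
    exact ⟨ConjClasses.mk g, hg⟩

lemma card_conj (hp : p.Prime) : Nat.card (ConjClasses (Md p)) = p ^ 3 + p ^ 2 - p := by
  haveI : Fact p.Prime := ⟨hp⟩
  rw [Nat.card_congr (conjEquiv hp)]
  have h1 : Nat.card ({v : ZMod p × ZMod p // v ≠ 0}) = p ^ 2 - 1 := by
    simp only [Nat.card_eq_fintype_card, ne_eq, Fintype.card_subtype_compl,
      Fintype.card_subtype_eq, Fintype.card_prod, ZMod.card]
    ring_nf
  have : Nat.card (TT p) = (p ^ 2 - 1) * p + p ^ 2 := by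
    rw [TT, Nat.card_sum, Nat.card_prod, Nat.card_prod, h1]
    simp [Nat.card_eq_fintype_card, ZMod.card]
    ring
  rw [this]
  have h2 : 1 ≤ p ^ 2 := Nat.one_le_two_pow.trans (Nat.pow_le_pow_left hp.two_le 2)
  have h3 : p ≤ p ^ 3 := Nat.le_self_pow (by norm_num) p
  have h4 : (p ^ 2 - 1) * p = p ^ 3 - p := by
    rw [Nat.sub_mul, one_mul, show p ^ 2 * p = p ^ 3 from by ring]
  omega

end Md
end Conj

section Aut
namespace Md
variable {p : ℕ}

@[ext] structure Par (p : ℕ) where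
  PA : Md p
  PB : Md p
  Pg : ZMod p
  Pd : ZMod p

def pdet (q : Par p) : ZMod p := q.PA.x * q.PB.y - q.PA.y * q.PB.x

def chi (x : ZMod p) : ZMod p := x * (x - 1) * (2 : ZMod p)⁻¹

@[simp] lemma chi_zero : chi (0 : ZMod p) = 0 := by simp [chi]
@[simp] lemma chi_one : chi (1 : ZMod p) = 0 := by simp [chi]

lemma chi_add (h2 : (2 : ZMod p) ≠ 0) [Fact p.Prime] (x y : ZMod p) :
    chi (x + y) = chi x + chi y + x * y := by
  unfold chi
  field_simp
  ring

def fq (q : Par p) (m : Md p) : Md p :=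
  ⟨q.PA.x * m.x + q.PB.x * m.y,
   q.PA.y * m.x + q.PB.y * m.y,
   q.PA.z * m.x + q.PB.z * m.y + q.Pg * m.z,
   q.PA.w * m.x + q.PB.w * m.y + q.Pd * m.z + chi m.x * (q.PA.x * q.PA.y)
     + chi m.y * (q.PB.x * q.PB.y) + (q.PA.x * m.x) * (q.PB.y * m.y)
     + pdet q * (m.w - m.x * m.y)⟩

@[simp] lemma fq_x (q : Par p) (m : Md p) : (fq q m).x = q.PA.x * m.x + q.PB.x * m.y := rfl
@[simp] lemma fq_y (q : Par p) (m : Md p) : (fq q m).y = q.PA.y * m.x + q.PB.y * m.y := rfl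
@[simp] lemma fq_z (q : Par p) (m : Md p) :
    (fq q m).z = q.PA.z * m.x + q.PB.z * m.y + q.Pg * m.z := rfl

lemma fq_mul (h2 : (2 : ZMod p) ≠ 0) [Fact p.Prime] (q : Par p) (m n : Md p) :
    fq q (m * n) = fq q m * fq q n := by
  ext
  · show q.PA.x * (m.x + n.x) + q.PB.x * (m.y + n.y) = _
    simp only [mul_x, fq_x]; ring
  · show q.PA.y * (m.x + n.x) + q.PB.y * (m.y + n.y) = _
    simp only [mul_y, fq_y]; ring
  · show q.PA.z * (m.x + n.x) + q.PB.z * (m.y + n.y) + q.Pg * (m.z + n.z) = _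
    simp only [mul_z, fq_z]; ring
  · show _ = _
    simp only [fq, pdet, mul_x, mul_y, mul_z, mul_w, chi_add h2]
    ring

def fqHom (h2 : (2 : ZMod p) ≠ 0) [Fact p.Prime] (q : Par p) : Md p →* Md p :=
  MonoidHom.mk' (fq q) (fq_mul h2 q)

lemma fq_A (q : Par p) : fq q (A : Md p) = q.PA := by
  unfold fq A; ext <;> simp
lemma fq_B (q : Par p) : fq q (B : Md p) = q.PB := by
  unfold fq B; ext <;> simp
lemma fq_C (q : Par p) : fq q (C : Md p) = ⟨0, 0, q.Pg, q.Pd⟩ := by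
  unfold fq C; ext <;> simp

lemma fq_injective [Fact p.Prime] (q : Par p)
    (hD : pdet q ≠ 0) (hg : q.Pg ≠ 0) : Function.Injective (fq q) := by
  intro m n h
  have h1 : q.PA.x * m.x + q.PB.x * m.y = q.PA.x * n.x + q.PB.x * n.y := congrArg Md.x h
  have h2' : q.PA.y * m.x + q.PB.y * m.y = q.PA.y * n.x + q.PB.y * n.y := congrArg Md.y h
  have h3 : q.PA.z * m.x + q.PB.z * m.y + q.Pg * m.z
      = q.PA.z * n.x + q.PB.z * n.y + q.Pg * n.z := congrArg Md.z h
  have h4 := congrArg Md.w h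
  have hx : m.x = n.x := by
    have hu : pdet q * (m.x - n.x) = 0 := by
      unfold pdet; linear_combination q.PB.y * h1 - q.PB.x * h2'
    have := (mul_eq_zero.mp hu).resolve_left hD
    exact sub_eq_zero.mp this
  have hy : m.y = n.y := by
    have hu : pdet q * (m.y - n.y) = 0 := by
      unfold pdet; linear_combination q.PA.x * h2' - q.PA.y * h1
    have := (mul_eq_zero.mp hu).resolve_left hD
    exact sub_eq_zero.mp this
  have hz : m.z = n.z := by
    have hu : q.Pg * (m.z - n.z) = 0 := by linear_combination h3 - q.PA.z * hx - q.PB.z * hy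
    have := (mul_eq_zero.mp hu).resolve_left hg
    exact sub_eq_zero.mp this
  have hw : m.w = n.w := by
    have hu : pdet q * (m.w - n.w) = 0 := by
      unfold fq at h4
      simp only at h4
      rw [hx, hy, hz] at h4
      linear_combination h4
    have := (mul_eq_zero.mp hu).resolve_left hD
    exact sub_eq_zero.mp this
  ext
  · exact hx
  · exact hy
  · exact hz
  · exact hw

lemma fq_bijective [Fact p.Prime] (q : Par p)
    (hD : pdet q ≠ 0) (hg : q.Pg ≠ 0) : Function.Bijective (fq q) :=
  Finite.injective_iff_bijective.mp (fq_injective q hD hg)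

def two_ne_zero' (hp : p.Prime) (h5 : 5 ≤ p) : (2 : ZMod p) ≠ 0 := by
  haveI : Fact p.Prime := ⟨hp⟩
  have : ((2 : ℕ) : ZMod p) ≠ 0 := by
    rw [Ne, ZMod.natCast_eq_zero_iff]
    intro hdvd
    have := Nat.le_of_dvd (by norm_num) hdvd
    omega
  simpa using this

/-- the parameter space -/
def PP (p : ℕ) : Type := {q : Par p // pdet q ≠ 0 ∧ q.Pg ≠ 0}

noncomputable def toAut (hp : p.Prime) (h5 : 5 ≤ p) (q : PP p) : MulAut (Md p) := by
  haveI : Fact p.Prime := ⟨hp⟩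
  exact MulEquiv.ofBijective (fqHom (two_ne_zero' hp h5) q.1) (fq_bijective q.1 q.2.1 q.2.2)

lemma toAut_apply (hp : p.Prime) (h5 : 5 ≤ p) (q : PP p) (m : Md p) :
    toAut hp h5 q m = fq q.1 m := rfl

lemma CA_comm : (C : Md p) * A = A * C := by ext <;> simp [A, C]
lemma CB_comm : (C : Md p) * B = B * C := by ext <;> simp [B, C]

lemma toAut_bijective (hp : p.Prime) (h5 : 5 ≤ p) :
    Function.Bijective (toAut hp h5 : PP p → MulAut (Md p)) := by
  haveI : Fact p.Prime := ⟨hp⟩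
  constructor
  · intro q r h
    have hA : q.1.PA = r.1.PA := by
      have := congrArg (fun α : MulAut (Md p) => α A) h
      simpa [toAut_apply, fq_A] using this
    have hB : q.1.PB = r.1.PB := by
      have := congrArg (fun α : MulAut (Md p) => α B) h
      simpa [toAut_apply, fq_B] using this
    have hC : (⟨0,0,q.1.Pg,q.1.Pd⟩ : Md p) = ⟨0,0,r.1.Pg,r.1.Pd⟩ := by
      have := congrArg (fun α : MulAut (Md p) => α C) h
      simpa [toAut_apply, fq_C] using this
    have hg : q.1.Pg = r.1.Pg := congrArg Md.z hC
    have hd : q.1.Pd = r.1.Pd := congrArg Md.w hC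
    apply Subtype.ext
    ext <;> simp [hA, hB, hg, hd]
  · intro α
    -- first show (α C).x = 0 and (α C).y = 0, and pdet ≠ 0
    set q : Par p := ⟨α A, α B, (α C).z, (α C).w⟩ with hq
    have hT : α T = ⟨0, 0, 0, pdet q⟩ := by
      rw [T_eq_comm]
      simp only [map_mul, map_inv]
      rw [comm_formula]
      rfl
    have hDne : pdet q ≠ 0 := by
      intro h0
      have hT1 : α T = 1 := by rw [hT, h0]; rfl
      have : (T : Md p) = 1 := α.injective (by rw [hT1, map_one])
      have := congrArg Md.w this
      simp [T] at this
    have hca : α C * α A = α A * α C := by rw [← map_mul, ← map_mul, CA_comm]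
    have hcb : α C * α B = α B * α C := by rw [← map_mul, ← map_mul, CB_comm]
    have e1 : (α C).x * (α A).y = (α A).x * (α C).y := by
      have := congrArg Md.w hca
      simp only [mul_w] at this
      linear_combination this
    have e2 : (α C).x * (α B).y = (α B).x * (α C).y := by
      have := congrArg Md.w hcb
      simp only [mul_w] at this
      linear_combination this
    have hCx : (α C).x = 0 := by
      have hu : pdet q * (α C).x = 0 := by
        unfold pdet
        simp only [hq]
        linear_combination (α A).x * e2 - (α B).x * e1
      exact (mul_eq_zero.mp hu).resolve_left hDne
    have hCy : (α C).y = 0 := by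
      have hu : pdet q * (α C).y = 0 := by
        unfold pdet
        simp only [hq]
        linear_combination (α A).y * e2 - (α B).y * e1
      exact (mul_eq_zero.mp hu).resolve_left hDne
    have hfqC : fq q C = α C := by
      rw [fq_C]
      ext
      · exact hCx.symm
      · exact hCy.symm
      · rfl
      · rfl
    have heq : (α : Md p →* Md p) = fqHom (two_ne_zero' hp h5) q := by
      apply MonoidHom.eq_of_eqOn_dense closure_gens
      intro x hx
      rcases hx with rfl | rfl | rfl
      · show α A = fq q A
        rw [fq_A]
      · show α B = fq q B
        rw [fq_B]
      · show α C = fq q C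
        rw [hfqC]
    have happ : ∀ m, α m = fq q m := fun m => by
      have := congrArg (fun f : Md p →* Md p => f m) heq
      exact this
    have hgne : q.Pg ≠ 0 := by
      intro h0
      obtain ⟨m, hm⟩ := α.surjective (C : Md p)
      have := congrArg Md.z (happ m ▸ hm)
      simp only [fq_z] at this
      have hx0 : m.x = 0 := by
        have u1 : q.PA.x * m.x + q.PB.x * m.y = 0 := by
          have := congrArg Md.x (happ m ▸ hm); simpa [C] using this
        have u2 : q.PA.y * m.x + q.PB.y * m.y = 0 := by
          have := congrArg Md.y (happ m ▸ hm); simpa [C] using this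
        have hu : pdet q * m.x = 0 := by
          unfold pdet; linear_combination q.PB.y * u1 - q.PB.x * u2
        exact (mul_eq_zero.mp hu).resolve_left hDne
      have hy0 : m.y = 0 := by
        have u1 : q.PA.x * m.x + q.PB.x * m.y = 0 := by
          have := congrArg Md.x (happ m ▸ hm); simpa [C] using this
        have u2 : q.PA.y * m.x + q.PB.y * m.y = 0 := by
          have := congrArg Md.y (happ m ▸ hm); simpa [C] using this
        have hu : pdet q * m.y = 0 := by
          unfold pdet; linear_combination q.PA.x * u2 - q.PA.y * u1
        exact (mul_eq_zero.mp hu).resolve_left hDne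
      have h0' : (α C).z = 0 := h0
      rw [hx0, hy0, h0] at this
      simp [C] at this
    refine ⟨⟨q, hDne, hgne⟩, ?_⟩
    apply MulEquiv.ext
    intro m
    show fq q m = α m
    exact (happ m).symm

end Md
end Aut

section Count
namespace Md
variable {p : ℕ}

local notation "V" => (ZMod p × ZMod p)

def SS (p : ℕ) : Type :=
  {uv : (ZMod p × ZMod p) × (ZMod p × ZMod p) // uv.1.1 * uv.2.2 - uv.1.2 * uv.2.1 ≠ 0}

def splitPP : PP p ≃ SS p × (((ZMod p × ZMod p) × (ZMod p × ZMod p)) ×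
    ({g : ZMod p // g ≠ 0} × ZMod p)) where
  toFun r := ⟨⟨((r.1.PA.x, r.1.PA.y), (r.1.PB.x, r.1.PB.y)), r.2.1⟩,
    ((r.1.PA.z, r.1.PA.w), (r.1.PB.z, r.1.PB.w)), (⟨r.1.Pg, r.2.2⟩, r.1.Pd)⟩
  invFun s := ⟨⟨⟨s.1.1.1.1, s.1.1.1.2, s.2.1.1.1, s.2.1.1.2⟩,
    ⟨s.1.1.2.1, s.1.1.2.2, s.2.1.2.1, s.2.1.2.2⟩, s.2.2.1.1, s.2.2.2⟩, s.1.2, s.2.2.1.2⟩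
  left_inv r := by
    apply Subtype.ext
    ext <;> rfl
  right_inv s := rfl

def lin (hp : p.Prime) (u : ZMod p × ZMod p) (hu : u ≠ 0) :
    (ZMod p × ZMod p) ≃ (ZMod p × ZMod p) := by
  haveI : Fact p.Prime := ⟨hp⟩
  have key : u.1 = 0 → u.2 ≠ 0 := fun h h2 => hu (Prod.ext h h2)
  exact {
    toFun := fun v => (u.1 * v.2 - u.2 * v.1, if u.1 = 0 then v.2 else v.1)
    invFun := fun w =>
      if h : u.1 = 0 then (-(w.1) / u.2, w.2) else (w.2, (w.1 + u.2 * w.2) / u.1)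
    left_inv := by
      intro v
      by_cases h : u.1 = 0
      · have h2 := key h
        ext <;> simp [h] <;> field_simp
      · ext <;> simp [h] <;> field_simp <;> ring
    right_inv := by
      intro w
      by_cases h : u.1 = 0
      · have h2 := key h
        ext <;> simp [h] <;> field_simp
      · ext <;> simp [h] <;> field_simp <;> ring }

def fsplit : {w : ZMod p × ZMod p // w.1 ≠ 0} ≃ {d : ZMod p // d ≠ 0} × ZMod p where
  toFun w := (⟨w.1.1, w.2⟩, w.1.2)
  invFun d := ⟨(d.1.1, d.2), d.1.2⟩
  left_inv w := rfl
  right_inv d := rfl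

def fiberEquiv (hp : p.Prime) (u : ZMod p × ZMod p) (hu : u ≠ 0) :
    {v : ZMod p × ZMod p // u.1 * v.2 - u.2 * v.1 ≠ 0} ≃
      {d : ZMod p // d ≠ 0} × ZMod p :=
  (Equiv.subtypeEquiv (lin hp u hu) (fun v => Iff.rfl)).trans fsplit

def SSequiv (hp : p.Prime) :
    SS p ≃ {u : ZMod p × ZMod p // u ≠ 0} × ({d : ZMod p // d ≠ 0} × ZMod p) := by
  refine (Equiv.trans ?_ (Equiv.trans
    (Equiv.sigmaCongrRight (fun u : {u : ZMod p × ZMod p // u ≠ 0} =>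
      fiberEquiv hp u.1 u.2)) (Equiv.sigmaEquivProd _ _)))
  exact {
    toFun := fun s => ⟨⟨s.1.1, fun h0 => s.2 (by
      have h1 : s.1.1.1 = 0 := congrArg Prod.fst h0
      have h2 : s.1.1.2 = 0 := congrArg Prod.snd h0
      rw [h1, h2]
      ring)⟩, ⟨s.1.2, s.2⟩⟩
    invFun := fun s => ⟨(s.1.1, s.2.1), s.2.2⟩
    left_inv := fun s => rfl
    right_inv := fun s => rfl }

lemma card_ne_zero_scalar (hp : p.Prime) : Nat.card {d : ZMod p // d ≠ 0} = p - 1 := by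
  haveI : Fact p.Prime := ⟨hp⟩
  simp only [Nat.card_eq_fintype_card, ne_eq, Fintype.card_subtype_compl,
    Fintype.card_subtype_eq, ZMod.card]

lemma card_ne_zero_vec (hp : p.Prime) :
    Nat.card {u : ZMod p × ZMod p // u ≠ 0} = p ^ 2 - 1 := by
  haveI : Fact p.Prime := ⟨hp⟩
  simp only [Nat.card_eq_fintype_card, ne_eq, Fintype.card_subtype_compl,
    Fintype.card_subtype_eq, Fintype.card_prod, ZMod.card]
  ring_nf

lemma card_PP (hp : p.Prime) : Nat.card (PP p) = ((p^2 - 1) * ((p - 1) * p)) * ((p^2 * p^2) * ((p - 1) * p)) := by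
  haveI : Fact p.Prime := ⟨hp⟩
  rw [Nat.card_congr (splitPP (p := p)), Nat.card_prod, Nat.card_prod, Nat.card_prod,
    Nat.card_prod, Nat.card_prod, Nat.card_congr (SSequiv hp), Nat.card_prod, Nat.card_prod,
    card_ne_zero_scalar hp, card_ne_zero_vec hp]
  simp only [Nat.card_eq_fintype_card, Fintype.card_prod, ZMod.card]
  ring_nf

lemma card_MulAut (hp : p.Prime) (h5 : 5 ≤ p) :
    Nat.card (MulAut (Md p)) = (p - 1) * (p ^ 2 - 1) * (p ^ 2 - p) * p ^ 5 := by
  haveI : Fact p.Prime := ⟨hp⟩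
  rw [← Nat.card_congr (Equiv.ofBijective _ (toAut_bijective hp h5)), card_PP hp]
  have hsub : (p - 1) * p = p ^ 2 - p := by
    rw [Nat.sub_mul, one_mul, ← pow_two]
  rw [← hsub]
  generalize p ^ 2 - 1 = b
  generalize p - 1 = a
  ring

end Md
end Count

section Final

def conjCongr {G H : Type*} [Group G] [Group H] (e : G ≃* H) :
    ConjClasses G ≃ ConjClasses H :=
  Quotient.congr e.toEquiv (fun a b => by
    constructor
    · intro h
      exact e.toMonoidHom.map_isConj h
    · intro h
      have h2 := e.symm.toMonoidHom.map_isConj h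
      exact ((by simpa using h2) : IsConj a b))


theorem group_4_3_1 (p : ℕ) (hp : p.Prime) (h5 : 5 ≤ p) :
    Nat.card (ConjClasses (ClassTwoGroup p 3 ({fgComm (FreeGroup.of (2 : Fin 3)) (FreeGroup.of (0 : Fin 3)), fgComm (FreeGroup.of (2 : Fin 3)) (FreeGroup.of (1 : Fin 3))} : Set (FreeGroup (Fin 3))))) = p ^ 3 + p ^ 2 - p ∧
    Nat.card (MulAut (ClassTwoGroup p 3 ({fgComm (FreeGroup.of (2 : Fin 3)) (FreeGroup.of (0 : Fin 3)), fgComm (FreeGroup.of (2 : Fin 3)) (FreeGroup.of (1 : Fin 3))} : Set (FreeGroup (Fin 3))))) = (p - 1) * (p ^ 2 - 1) * (p ^ 2 - p) * p ^ 5 := by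
  have e : Gp p ≃* Md p := Gp.isoG hp h5
  constructor
  · rw [Nat.card_congr (conjCongr e)]
    exact Md.card_conj hp
  · rw [Nat.card_congr (MulAut.congr e).toEquiv]
    exact Md.card_MulAut hp h5

end Final
end

section
/- Let p ≥ 5 be a prime and let G = ⟨a,b,c⟩ be the relatively free group of nilpotency class 2 and exponent p on three generators (group 6.3.1, of order p^6). Then the number of conjugacy classes of G is p^4 + p^3 − p, and the automorphism group of G has order (p^3 − 1)(p^3 − p)(p^3 − p^2)p^9. -/
namespace G631

/-- index helpers for wedge coordinates: pair k ↦ (ka k, kb k) with ka > kb -/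
def ka : Fin 3 → Fin 3 := ![1, 2, 2]
def kb : Fin 3 → Fin 3 := ![0, 0, 1]

variable (p : ℕ)

/-- The bilinear form recording "upper" products. -/
def bb (v w : Fin 3 → ZMod p) : Fin 3 → ZMod p := fun k => v (ka k) * w (kb k)

variable {p}

lemma bb_add_left (v v' w : Fin 3 → ZMod p) : bb p (v + v') w = bb p v w + bb p v' w := by
  funext k; simp [bb]; ring

lemma bb_add_right (v w w' : Fin 3 → ZMod p) : bb p v (w + w') = bb p v w + bb p v w' := by
  funext k; simp [bb]; ring

lemma bb_zero_left (w : Fin 3 → ZMod p) : bb p 0 w = 0 := by funext k; simp [bb]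
lemma bb_zero_right (w : Fin 3 → ZMod p) : bb p w 0 = 0 := by funext k; simp [bb]

lemma bb_neg_left (v w : Fin 3 → ZMod p) : bb p (-v) w = - bb p v w := by
  funext k; simp [bb]

lemma bb_neg_right (v w : Fin 3 → ZMod p) : bb p v (-w) = - bb p v w := by
  funext k; simp [bb]

lemma bb_nsmul_left (n : ℕ) (v w : Fin 3 → ZMod p) : bb p (n • v) w = n • bb p v w := by
  funext k; simp [bb, nsmul_eq_mul]; ring

lemma bb_smul_left (t : ZMod p) (v w : Fin 3 → ZMod p) : bb p (t • v) w = t • bb p v w := by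
  funext k; simp [bb, smul_eq_mul]; ring

lemma bb_smul_right (t : ZMod p) (v w : Fin 3 → ZMod p) : bb p v (t • w) = t • bb p v w := by
  funext k; simp [bb, smul_eq_mul]; ring

/-- The model group: pairs (v, z). -/
@[ext] structure M (p : ℕ) where
  v : Fin 3 → ZMod p
  z : Fin 3 → ZMod p

namespace M

instance : One (M p) := ⟨⟨0, 0⟩⟩
instance : Mul (M p) := ⟨fun g h => ⟨g.v + h.v, g.z + h.z + bb p g.v h.v⟩⟩
instance : Inv (M p) := ⟨fun g => ⟨-g.v, -g.z + bb p g.v g.v⟩⟩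

lemma mul_def (g h : M p) : g * h = ⟨g.v + h.v, g.z + h.z + bb p g.v h.v⟩ := rfl
lemma one_def : (1 : M p) = ⟨0, 0⟩ := rfl
lemma inv_def (g : M p) : g⁻¹ = ⟨-g.v, -g.z + bb p g.v g.v⟩ := rfl

instance : Group (M p) where
  mul_assoc g h k := by
    ext i <;> simp [mul_def, bb_add_left, bb_add_right] <;> ring
  one_mul g := by ext i <;> simp [mul_def, one_def, bb_zero_left]
  mul_one g := by ext i <;> simp [mul_def, one_def, bb_zero_right]
  inv_mul_cancel g := by
    ext i <;> simp [mul_def, inv_def, one_def, bb_neg_left] <;> ring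

end M

end G631

namespace G631
namespace M
variable {p : ℕ}

/-- skew form -/
def om (v w : Fin 3 → ZMod p) : Fin 3 → ZMod p := bb p v w - bb p w v

lemma cmt_eq (g h : M p) : g⁻¹ * h⁻¹ * g * h = ⟨0, om g.v h.v⟩ := by
  ext i <;>
    simp [mul_def, inv_def, om, bb_add_left, bb_add_right, bb_neg_left, bb_neg_right] <;> ring

lemma central_z (z : Fin 3 → ZMod p) (g : M p) : (⟨0, z⟩ : M p) * g = g * ⟨0, z⟩ := by
  ext i <;> simp [mul_def, bb_zero_left, bb_zero_right] <;> ring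

lemma pow_eq (g : M p) (n : ℕ) :
    g ^ n = ⟨n • g.v, n • g.z + (n.choose 2) • bb p g.v g.v⟩ := by
  induction n with
  | zero => ext i <;> simp [one_def]
  | succ n ih =>
    rw [pow_succ, ih]
    ext i <;> simp [mul_def, bb, Nat.choose_succ_succ, Nat.choose_one_right,
      add_smul, succ_nsmul] <;> ring

lemma pow_p (hp : p.Prime) (hodd : p ≠ 2) (g : M p) : g ^ p = 1 := by
  obtain ⟨m, hm⟩ := hp.dvd_choose_self (k := 2) (by norm_num) (by
    rcases hp.two_le.lt_or_eq with h | h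
    · omega
    · omega)
  have hpz : ∀ x : Fin 3 → ZMod p, p • x = 0 := by
    intro x; funext i
    simp [Pi.smul_apply, nsmul_eq_mul, ZMod.natCast_self]
  rw [pow_eq, one_def, hm]
  ext i <;> simp [mul_smul, hpz, Pi.smul_apply, nsmul_eq_mul, ZMod.natCast_self]

lemma triple_cmt (g h k : M p) :
    (g⁻¹ * h⁻¹ * g * h)⁻¹ * k⁻¹ * (g⁻¹ * h⁻¹ * g * h) * k = 1 := by
  rw [cmt_eq g h, cmt_eq (⟨0, om g.v h.v⟩ : M p) k]
  ext i <;> simp [om, one_def, bb_zero_left, bb_zero_right]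

/-- M is just a product as a type. -/
def prodEquiv : M p ≃ (Fin 3 → ZMod p) × (Fin 3 → ZMod p) :=
  { toFun := fun g => (g.v, g.z)
    invFun := fun x => ⟨x.1, x.2⟩
    left_inv := fun g => rfl
    right_inv := fun x => rfl }

lemma finite_M (hp : p.Prime) : Finite (M p) := by
  haveI : NeZero p := ⟨hp.ne_zero⟩
  exact Finite.of_equiv _ prodEquiv.symm

lemma card_M (hp : p.Prime) : Nat.card (M p) = p ^ 6 := by
  haveI : NeZero p := ⟨hp.ne_zero⟩
  haveI : Fintype (M p) := Fintype.ofEquiv _ prodEquiv.symm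
  rw [Nat.card_congr prodEquiv]
  simp [Nat.card_eq_fintype_card, ZMod.card]
  ring

end M
end G631

namespace G631

/-- our commutator convention -/
def cm {G : Type*} [Group G] (a b : G) : G := a⁻¹ * b⁻¹ * a * b

section CommCalc

variable {G : Type*} [Group G]

lemma mul_cm (a b : G) : b * a = a * b * cm b a := by
  unfold cm; group

lemma comm_of_cm_eq_one {a b : G} (h : cm a b = 1) : a * b = b * a := by
  have h2 : b * a * cm a b = a * b := by unfold cm; group
  rw [h, mul_one] at h2; exact h2.symm

lemma cm_commute (Hc : ∀ a b k : G, cm a b * k = k * cm a b) (a b k : G) :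
    Commute (cm a b) k := Hc a b k

lemma pow_mul_pow (Hc : ∀ a b k : G, cm a b * k = k * cm a b) (a b : G) (m n : ℕ) :
    b ^ n * a ^ m = a ^ m * b ^ n * cm b a ^ (m * n) := by
  have key : ∀ n : ℕ, b ^ n * a = a * b ^ n * cm b a ^ n := by
    intro n
    induction n with
    | zero => simp
    | succ n ih =>
      have hcent : Commute (cm b a ^ n) b := ((cm_commute Hc b a b).pow_left n)
      calc b ^ (n + 1) * a = b ^ n * (b * a) := by rw [pow_succ]; group
        _ = b ^ n * (a * b * cm b a) := by rw [← mul_cm]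
        _ = (b ^ n * a) * b * cm b a := by group
        _ = a * b ^ n * cm b a ^ n * b * cm b a := by rw [ih]
        _ = a * b ^ n * (cm b a ^ n * b) * cm b a := by group
        _ = a * b ^ n * (b * cm b a ^ n) * cm b a := by rw [hcent.eq]
        _ = a * b ^ (n + 1) * cm b a ^ (n + 1) := by rw [pow_succ, pow_succ]; group
  induction m with
  | zero => simp
  | succ m ih =>
    have hcent : Commute (cm b a ^ (m * n)) a := ((cm_commute Hc b a a).pow_left _)
    calc b ^ n * a ^ (m + 1) = (b ^ n * a ^ m) * a := by rw [pow_succ]; group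
      _ = a ^ m * b ^ n * cm b a ^ (m * n) * a := by rw [ih]
      _ = a ^ m * b ^ n * (cm b a ^ (m * n) * a) := by group
      _ = a ^ m * b ^ n * (a * cm b a ^ (m * n)) := by rw [hcent.eq]
      _ = a ^ m * (b ^ n * a) * cm b a ^ (m * n) := by group
      _ = a ^ m * (a * b ^ n * cm b a ^ n) * cm b a ^ (m * n) := by rw [key n]
      _ = a ^ (m + 1) * b ^ n * (cm b a ^ n * cm b a ^ (m * n)) := by rw [pow_succ]; group
      _ = a ^ (m + 1) * b ^ n * cm b a ^ ((m + 1) * n) := by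
          rw [← pow_add]; ring_nf

end CommCalc

section PowCalc

variable {p : ℕ} [NeZero p] {G : Type*} [Group G]

/-- power with `ZMod p` exponent -/
def pw (g : G) (t : ZMod p) : G := g ^ t.val

lemma pow_eq_pw (HP : ∀ g : G, g ^ p = 1) (g : G) (n : ℕ) : g ^ n = pw g (n : ZMod p) := by
  have h1 : orderOf g ∣ p := orderOf_dvd_of_pow_eq_one (HP g)
  have h2 : n ≡ (n : ZMod p).val [MOD p] := by
    rw [ZMod.val_natCast]
    exact (Nat.mod_mod_of_dvd n dvd_rfl).symm ▸ (Nat.mod_modEq n p).symm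
  exact (pow_eq_pow_iff_modEq.mpr (h2.of_dvd h1))

lemma val_cast (a : ZMod p) : ((a.val : ℕ) : ZMod p) = a := ZMod.natCast_rightInverse a

lemma pw_add (HP : ∀ g : G, g ^ p = 1) (g : G) (s t : ZMod p) :
    pw g (s + t) = pw g s * pw g t := by
  have h : g ^ (s.val + t.val) = pw g (s + t) := by
    rw [pow_eq_pw HP]
    congr 1
    push_cast [val_cast]
    ring
  have h2 := pow_add g s.val t.val
  rw [h] at h2
  exact h2

lemma pw_zero (g : G) : pw g (0 : ZMod p) = 1 := by
  rw [pw, ZMod.val_zero, pow_zero]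

lemma pw_one_exp (hp1 : 1 < p) (g : G) : pw g (1 : ZMod p) = g := by
  haveI : Fact (1 < p) := ⟨hp1⟩
  rw [pw, ZMod.val_one, pow_one]

lemma pw_inv (HP : ∀ g : G, g ^ p = 1) (hp1 : 1 < p) (g : G) :
    g⁻¹ = pw g (-1 : ZMod p) := by
  have h1 : pw g (-1 : ZMod p) * g = 1 := by
    have h := pw_add HP g (-1) 1
    rw [neg_add_cancel, pw_zero, pw_one_exp hp1] at h
    exact h.symm
  exact inv_eq_of_mul_eq_one_left h1

lemma pw_cm (HP : ∀ g : G, g ^ p = 1) (Hc : ∀ a b k : G, cm a b * k = k * cm a b)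
    (a b : G) (s t : ZMod p) :
    pw b t * pw a s = pw a s * pw b t * pw (cm b a) (s * t) := by
  have h2 : cm b a ^ (s.val * t.val) = pw (cm b a) (s * t) := by
    rw [pow_eq_pw HP]
    congr 1
    push_cast [val_cast]
    ring
  have h := pow_mul_pow Hc a b s.val t.val
  rw [h2] at h
  exact h

end PowCalc

end G631
namespace G631

section PG

variable {p : ℕ}

/-- our presented group -/
abbrev Pg (p : ℕ) : Type := PresentedGroup (classTwoRels p 3 (∅ : Set (FreeGroup (Fin 3))))

lemma Pg_pow (g : Pg p) : g ^ p = 1 := by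
  obtain ⟨w, rfl⟩ := PresentedGroup.mk_surjective _ g
  have hm : w ^ p ∈ classTwoRels p 3 (∅ : Set (FreeGroup (Fin 3))) :=
    Set.mem_union_left _ (Set.mem_union_right _ ⟨w, rfl⟩)
  have h1 : PresentedGroup.mk _ (w ^ p) = 1 :=
    (QuotientGroup.eq_one_iff _).mpr (Subgroup.subset_normalClosure hm)
  simpa [map_pow] using h1

lemma Pg_cm3 (g h k : Pg p) : cm (cm g h) k = 1 := by
  obtain ⟨u, rfl⟩ := PresentedGroup.mk_surjective _ g
  obtain ⟨v, rfl⟩ := PresentedGroup.mk_surjective _ h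
  obtain ⟨w, rfl⟩ := PresentedGroup.mk_surjective _ k
  have hm : fgComm (fgComm u v) w ∈ classTwoRels p 3 (∅ : Set (FreeGroup (Fin 3))) :=
    Set.mem_union_right _ ⟨u, v, w, rfl⟩
  have h1 : PresentedGroup.mk _ (fgComm (fgComm u v) w) = 1 :=
    (QuotientGroup.eq_one_iff _).mpr (Subgroup.subset_normalClosure hm)
  simpa [fgComm, cm, map_mul, map_inv] using h1

lemma Pg_cent : ∀ a b k : Pg p, cm a b * k = k * cm a b := fun a b k =>
  comm_of_cm_eq_one (Pg_cm3 a b k)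

/-- generators -/
def Xg (i : Fin 3) : Pg p := PresentedGroup.of i

/-- basic commutators -/
def Dg (k : Fin 3) : Pg p := cm (Xg (ka k)) (Xg (kb k))

variable [NeZero p]

lemma Dg_central (k : Fin 3) (x : Pg p) : Commute (Dg k) x := Pg_cent _ _ x

lemma pw_Dg_central (k : Fin 3) (t : ZMod p) (x : Pg p) : Commute (pw (Dg k) t) x :=
  ((Dg_central k x).pow_left _)

/-- central part -/
def Zf (z : Fin 3 → ZMod p) : Pg p := pw (Dg 0) (z 0) * pw (Dg 1) (z 1) * pw (Dg 2) (z 2)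

lemma Zf_central (z : Fin 3 → ZMod p) (x : Pg p) : Commute (Zf z) x :=
  (((pw_Dg_central 0 (z 0) x).mul_left (pw_Dg_central 1 (z 1) x)).symm).symm.mul_left
    (pw_Dg_central 2 (z 2) x) |>.symm.symm

lemma Zf_add (z z' : Fin 3 → ZMod p) : Zf (z + z') = Zf z * Zf z' := by
  unfold Zf
  simp only [Pi.add_apply]
  rw [pw_add Pg_pow, pw_add Pg_pow, pw_add Pg_pow]
  -- now reorder: all factors pairwise commute
  have c : ∀ (i j : Fin 3) (t s : ZMod p), Commute (pw (Dg i) t) (pw (Dg j) s) :=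
    fun i j t s => pw_Dg_central i t _
  calc pw (Dg 0) (z 0) * pw (Dg 0) (z' 0) * (pw (Dg 1) (z 1) * pw (Dg 1) (z' 1)) *
        (pw (Dg 2) (z 2) * pw (Dg 2) (z' 2))
      = pw (Dg 0) (z 0) * (pw (Dg 0) (z' 0) * pw (Dg 1) (z 1)) * pw (Dg 1) (z' 1) *
        (pw (Dg 2) (z 2) * pw (Dg 2) (z' 2)) := by group
    _ = pw (Dg 0) (z 0) * (pw (Dg 1) (z 1) * pw (Dg 0) (z' 0)) * pw (Dg 1) (z' 1) *
        (pw (Dg 2) (z 2) * pw (Dg 2) (z' 2)) := by rw [(c 0 1 (z' 0) (z 1)).eq]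
    _ = pw (Dg 0) (z 0) * pw (Dg 1) (z 1) * (pw (Dg 0) (z' 0) * pw (Dg 1) (z' 1) *
        pw (Dg 2) (z 2)) * pw (Dg 2) (z' 2) := by group
    _ = pw (Dg 0) (z 0) * pw (Dg 1) (z 1) * (pw (Dg 2) (z 2) * (pw (Dg 0) (z' 0) *
        pw (Dg 1) (z' 1))) * pw (Dg 2) (z' 2) := by
          rw [((c 0 2 (z' 0) (z 2)).mul_left (c 1 2 (z' 1) (z 2))).symm.eq]
    _ = pw (Dg 0) (z 0) * pw (Dg 1) (z 1) * pw (Dg 2) (z 2) *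
        (pw (Dg 0) (z' 0) * pw (Dg 1) (z' 1) * pw (Dg 2) (z' 2)) := by group

/-- the normal form map -/
def fP (g : M p) : Pg p :=
  pw (Xg 0) (g.v 0) * pw (Xg 1) (g.v 1) * pw (Xg 2) (g.v 2) * Zf g.z

lemma fP_one : fP (1 : M p) = 1 := by
  unfold fP Zf
  simp [M.one_def, pw_zero]

lemma Zf_mul_pw (z : Fin 3 → ZMod p) (k : Fin 3) (s : ZMod p) :
    Zf z * pw (Dg k) s = Zf (z + Pi.single k s) := by
  have h1 : Zf (Pi.single k s) = pw (Dg k) s := by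
    fin_cases k <;> unfold Zf <;>
      simp [Pi.single_apply, pw_zero]
  rw [Zf_add, h1]

end PG
end G631
namespace G631
section PG2

variable {p : ℕ} [NeZero p]

lemma ka0 : ka 0 = 1 := rfl
lemma kb0 : kb 0 = 0 := rfl

lemma hstep0 (t : ZMod p) (v z : Fin 3 → ZMod p) :
    ∃ g' : M p, pw (Xg 0) t * fP (⟨v, z⟩ : M p) = fP g' := by
  · refine ⟨⟨Function.update v 0 (t + v 0), z⟩, ?_⟩
    unfold fP
    simp only [Function.update_self, Function.update_of_ne (by decide : (1:Fin 3) ≠ 0),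
      Function.update_of_ne (by decide : (2:Fin 3) ≠ 0)]
    rw [pw_add Pg_pow]
    group

lemma hstep1 (t : ZMod p) (v z : Fin 3 → ZMod p) :
    ∃ g' : M p, pw (Xg 1) t * fP (⟨v, z⟩ : M p) = fP g' := by
  refine ⟨⟨Function.update v 1 (t + v 1), z + Pi.single (0 : Fin 3) (v 0 * t)⟩, ?_⟩
  unfold fP
  simp only [Function.update_self, Function.update_of_ne (by decide : (0:Fin 3) ≠ 1),
    Function.update_of_ne (by decide : (2:Fin 3) ≠ 1)]
  rw [← Zf_mul_pw]
  have hmove : ∀ (k : Fin 3) (s : ZMod p) (b : Pg p), pw (Dg k) s * b = b * pw (Dg k) s :=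
    fun k s b => (pw_Dg_central k s b).eq
  have h1 : pw ((Xg 1) : Pg p) t * pw (Xg 0) (v 0) =
      pw (Xg 0) (v 0) * pw (Xg 1) t * pw (Dg 0) (v 0 * t) := by
    have := pw_cm Pg_pow Pg_cent (Xg 0) (Xg 1) (v 0) t
    simpa [Dg, ka, kb] using this
  calc pw (Xg 1) t * (pw (Xg 0) (v 0) * pw (Xg 1) (v 1) * pw (Xg 2) (v 2) * Zf z)
      = (pw (Xg 1) t * pw (Xg 0) (v 0)) * (pw (Xg 1) (v 1) * pw (Xg 2) (v 2) * Zf z) := by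
        group
    _ = (pw (Xg 0) (v 0) * pw (Xg 1) t * pw (Dg 0) (v 0 * t)) *
        (pw (Xg 1) (v 1) * pw (Xg 2) (v 2) * Zf z) := by rw [h1]
    _ = pw (Xg 0) (v 0) * pw (Xg 1) t *
        (pw (Dg 0) (v 0 * t) * (pw (Xg 1) (v 1) * pw (Xg 2) (v 2) * Zf z)) := by group
    _ = pw (Xg 0) (v 0) * pw (Xg 1) t *
        ((pw (Xg 1) (v 1) * pw (Xg 2) (v 2) * Zf z) * pw (Dg 0) (v 0 * t)) := by rw [hmove]
    _ = pw (Xg 0) (v 0) * (pw (Xg 1) t * pw (Xg 1) (v 1)) * pw (Xg 2) (v 2) *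
        (Zf z * pw (Dg 0) (v 0 * t)) := by group
    _ = pw (Xg 0) (v 0) * pw (Xg 1) (t + v 1) * pw (Xg 2) (v 2) *
        (Zf z * pw (Dg 0) (v 0 * t)) := by rw [pw_add Pg_pow]

lemma hstep2 (t : ZMod p) (v z : Fin 3 → ZMod p) :
    ∃ g' : M p, pw (Xg 2) t * fP (⟨v, z⟩ : M p) = fP g' := by
  refine ⟨⟨Function.update v 2 (t + v 2),
    z + Pi.single (1 : Fin 3) (v 0 * t) + Pi.single (2 : Fin 3) (v 1 * t)⟩, ?_⟩
  unfold fP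
  simp only [Function.update_self, Function.update_of_ne (by decide : (0:Fin 3) ≠ 2),
    Function.update_of_ne (by decide : (1:Fin 3) ≠ 2)]
  rw [← Zf_mul_pw, ← Zf_mul_pw]
  have hmove : ∀ (k : Fin 3) (s : ZMod p) (b : Pg p), pw (Dg k) s * b = b * pw (Dg k) s :=
    fun k s b => (pw_Dg_central k s b).eq
  have h1 : pw ((Xg 2) : Pg p) t * pw (Xg 0) (v 0) =
      pw (Xg 0) (v 0) * pw (Xg 2) t * pw (Dg 1) (v 0 * t) := by
    have := pw_cm Pg_pow Pg_cent (Xg 0) (Xg 2) (v 0) t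
    simpa [Dg, ka, kb] using this
  have h2 : pw ((Xg 2) : Pg p) t * pw (Xg 1) (v 1) =
      pw (Xg 1) (v 1) * pw (Xg 2) t * pw (Dg 2) (v 1 * t) := by
    have := pw_cm Pg_pow Pg_cent (Xg 1) (Xg 2) (v 1) t
    simpa [Dg, ka, kb] using this
  calc pw (Xg 2) t * (pw (Xg 0) (v 0) * pw (Xg 1) (v 1) * pw (Xg 2) (v 2) * Zf z)
      = (pw (Xg 2) t * pw (Xg 0) (v 0)) * (pw (Xg 1) (v 1) * pw (Xg 2) (v 2) * Zf z) := by
        group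
    _ = (pw (Xg 0) (v 0) * pw (Xg 2) t * pw (Dg 1) (v 0 * t)) *
        (pw (Xg 1) (v 1) * pw (Xg 2) (v 2) * Zf z) := by rw [h1]
    _ = pw (Xg 0) (v 0) * pw (Xg 2) t *
        (pw (Dg 1) (v 0 * t) * (pw (Xg 1) (v 1) * pw (Xg 2) (v 2) * Zf z)) := by group
    _ = pw (Xg 0) (v 0) * pw (Xg 2) t *
        ((pw (Xg 1) (v 1) * pw (Xg 2) (v 2) * Zf z) * pw (Dg 1) (v 0 * t)) := by rw [hmove]
    _ = pw (Xg 0) (v 0) * (pw (Xg 2) t * pw (Xg 1) (v 1)) *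
        (pw (Xg 2) (v 2) * Zf z * pw (Dg 1) (v 0 * t)) := by group
    _ = pw (Xg 0) (v 0) * (pw (Xg 1) (v 1) * pw (Xg 2) t * pw (Dg 2) (v 1 * t)) *
        (pw (Xg 2) (v 2) * Zf z * pw (Dg 1) (v 0 * t)) := by rw [h2]
    _ = pw (Xg 0) (v 0) * pw (Xg 1) (v 1) * pw (Xg 2) t *
        (pw (Dg 2) (v 1 * t) * (pw (Xg 2) (v 2) * Zf z * pw (Dg 1) (v 0 * t))) := by group
    _ = pw (Xg 0) (v 0) * pw (Xg 1) (v 1) * pw (Xg 2) t *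
        ((pw (Xg 2) (v 2) * Zf z * pw (Dg 1) (v 0 * t)) * pw (Dg 2) (v 1 * t)) := by rw [hmove]
    _ = pw (Xg 0) (v 0) * pw (Xg 1) (v 1) * (pw (Xg 2) t * pw (Xg 2) (v 2)) *
        (Zf z * pw (Dg 1) (v 0 * t) * pw (Dg 2) (v 1 * t)) := by group
    _ = pw (Xg 0) (v 0) * pw (Xg 1) (v 1) * pw (Xg 2) (t + v 2) *
        (Zf z * pw (Dg 1) (v 0 * t) * pw (Dg 2) (v 1 * t)) := by rw [pw_add Pg_pow]

lemma hstep (i : Fin 3) (t : ZMod p) (g : M p) :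
    ∃ g' : M p, pw (Xg i) t * fP g = fP g' := by
  obtain ⟨v, z⟩ := g
  fin_cases i
  · exact hstep0 t v z
  · exact hstep1 t v z
  · exact hstep2 t v z

lemma fP_surj (h1p : 1 < p) : Function.Surjective (fP (p := p)) := by
  intro x
  induction x using PresentedGroup.induction_on with
  | H w =>
  have key : ∀ (w : FreeGroup (Fin 3)) (s : Pg p), (∃ g, fP g = s) →
      ∃ g, fP g = PresentedGroup.mk _ w * s := by
    intro w
    induction w using FreeGroup.induction_on with
    | C1 => intro s hs; simpa using hs
    | of i =>
      rintro s ⟨g, rfl⟩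
      obtain ⟨g', hg'⟩ := hstep i 1 g
      refine ⟨g', ?_⟩
      rw [hg'.symm, pw_one_exp h1p]
      rfl
    | inv_of i _ =>
      rintro s ⟨g, rfl⟩
      obtain ⟨g', hg'⟩ := hstep i (-1) g
      refine ⟨g', ?_⟩
      rw [hg'.symm]
      have : ((PresentedGroup.mk (classTwoRels p 3 (∅ : Set (FreeGroup (Fin 3))))) (FreeGroup.of i))⁻¹ = pw (Xg i) (-1 : ZMod p) :=
        pw_inv Pg_pow h1p _
      rw [map_inv, this]
    | mul u v hu hv =>
      intro s hs
      obtain ⟨g1, hg1⟩ := hv s hs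
      obtain ⟨g2, hg2⟩ := hu _ ⟨g1, hg1⟩
      refine ⟨g2, ?_⟩
      rw [hg2, map_mul]
      group
  obtain ⟨g, hg⟩ := key w 1 ⟨1, fP_one⟩
  exact ⟨g, by simpa using hg⟩

end PG2
end G631
namespace G631
section PG3

variable {p : ℕ}

/-- generators of M -/
def genM (i : Fin 3) : M p := ⟨Pi.single i 1, 0⟩

lemma M.cm_eq (g h : M p) : cm g h = ⟨0, om g.v h.v⟩ := M.cmt_eq g h

lemma M.cm3 (g h k : M p) : cm (cm g h) k = 1 := M.triple_cmt g h k

lemma lift_fgComm {G : Type*} [Group G] (F : FreeGroup (Fin 3) →* G) (u v : FreeGroup (Fin 3)) :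
    F (fgComm u v) = cm (F u) (F v) := by
  rw [fgComm, cm, map_mul, map_mul, map_mul, map_inv, map_inv]

lemma relsM_any (hp : p.Prime) (h5 : 5 ≤ p) (f : Fin 3 → M p) :
    ∀ r ∈ classTwoRels p 3 (∅ : Set (FreeGroup (Fin 3))),
      FreeGroup.lift f r = 1 := by
  intro r hr
  rcases hr with (hr | ⟨w, rfl⟩) | ⟨u, v, w, rfl⟩
  · exact absurd hr (Set.notMem_empty r)
  · rw [map_pow]
    exact M.pow_p hp (by omega) _
  · rw [lift_fgComm, lift_fgComm]
    exact M.cm3 _ _ _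

variable (hp : p.Prime) (h5 : 5 ≤ p)

/-- the projection hom -/
def phiP : Pg p →* M p := PresentedGroup.toGroup (relsM_any hp h5 genM)

lemma phiP_of (i : Fin 3) : phiP hp h5 (Xg i) = genM i := PresentedGroup.toGroup.of _

lemma phiP_Dg (k : Fin 3) : phiP hp h5 (Dg k) = ⟨0, Pi.single k 1⟩ := by
  have h1 : phiP hp h5 (Dg k) = cm (genM (ka k) : M p) (genM (kb k)) := by
    rw [Dg, cm, map_mul, map_mul, map_mul, map_inv, map_inv, phiP_of, phiP_of]
    rfl
  rw [h1, M.cm_eq]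
  congr 1
  funext j
  fin_cases k <;> fin_cases j <;>
    simp [M.om, genM, bb, ka, kb, Pi.single_apply]

section withNZ
variable [NeZero p]

lemma nsmul_val (t : ZMod p) (x : Fin 3 → ZMod p) : t.val • x = t • x := by
  funext j
  simp only [Pi.smul_apply, nsmul_eq_mul, smul_eq_mul]
  rw [val_cast]

lemma M.pw_single (i : Fin 3) (t : ZMod p) :
    pw (genM i : M p) t = ⟨t • (Pi.single i 1 : Fin 3 → ZMod p), 0⟩ := by
  have hbb : bb p (Pi.single i (1 : ZMod p)) (Pi.single i 1) = 0 := by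
    funext k
    fin_cases i <;> fin_cases k <;> simp [bb, ka, kb, Pi.single_apply]
  rw [pw, M.pow_eq]
  ext j
  · simp [genM, nsmul_val]
  · simp [genM, hbb]

lemma M.pw_c (w : Fin 3 → ZMod p) (t : ZMod p) :
    pw (⟨0, w⟩ : M p) t = ⟨0, t • w⟩ := by
  have hbb : bb p (0 : Fin 3 → ZMod p) 0 = 0 := bb_zero_left 0
  rw [pw, M.pow_eq]
  have h2 : t.val • w = t • w := nsmul_val t w
  ext j
  · simp
  · show (t.val • w + (t.val.choose 2) • bb p 0 0) j = (t • w) j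
    rw [hbb, h2]
    simp

lemma phiP_fP (g : M p) : phiP hp h5 (fP g) = g := by
  obtain ⟨v, z⟩ := g
  have hx : ∀ (i : Fin 3) (t : ZMod p),
      phiP hp h5 (pw (Xg i) t) = (⟨t • (Pi.single i 1 : Fin 3 → ZMod p), 0⟩ : M p) := by
    intro i t
    rw [pw, map_pow, phiP_of, ← pw, M.pw_single]
  have hd : ∀ (k : Fin 3) (t : ZMod p),
      phiP hp h5 (pw (Dg k) t) = (⟨0, t • (Pi.single k 1 : Fin 3 → ZMod p)⟩ : M p) := by
    intro k t
    rw [pw, map_pow, phiP_Dg, ← pw, M.pw_c]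
  unfold fP Zf
  simp only [map_mul, hx, hd]
  ext j <;> fin_cases j <;>
    simp [M.mul_def, bb, ka, kb, Pi.single_apply] <;> ring

/-- the isomorphism -/
noncomputable def eqvP : Pg p ≃* M p :=
  MulEquiv.ofBijective (phiP hp h5)
    ⟨by
      intro x y h
      obtain ⟨a, rfl⟩ := fP_surj hp.one_lt x
      obtain ⟨b, rfl⟩ := fP_surj hp.one_lt y
      rw [phiP_fP, phiP_fP] at h
      rw [h],
     fun g => ⟨fP g, phiP_fP hp h5 g⟩⟩

lemma eqvP_of (i : Fin 3) : eqvP hp h5 (Xg i) = genM i := phiP_of hp h5 i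

end withNZ
end PG3
end G631
namespace G631
section CC

variable {p : ℕ}

lemma commute_iff (g h : M p) : Commute g h ↔ bb p g.v h.v = bb p h.v g.v := by
  have : Commute g h ↔ g * h = h * g := Iff.rfl
  rw [this, M.mul_def, M.mul_def, M.mk.injEq]
  constructor
  · rintro ⟨-, h2⟩
    rwa [add_comm h.z g.z, add_right_inj] at h2
  · intro hb
    exact ⟨add_comm _ _, by rw [add_comm h.z g.z, add_right_inj]; exact hb⟩

lemma dep_of_symm {v w : Fin 3 → ZMod p} (hp : p.Prime) (hv : v ≠ 0)
    (hw : bb p v w = bb p w v) : ∃ t : ZMod p, w = t • v := by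
  haveI : Fact p.Prime := ⟨hp⟩
  obtain ⟨j, hj⟩ := Function.ne_iff.mp hv
  have hj' : v j ≠ 0 := by simpa using hj
  have hw0 := congrFun hw 0
  have hw1 := congrFun hw 1
  have hw2 := congrFun hw 2
  simp only [bb, ka, kb] at hw0 hw1 hw2
  norm_num at hw0 hw1 hw2
  have c00 : v 0 * w 0 = w 0 * v 0 := by ring
  have c11 : v 1 * w 1 = w 1 * v 1 := by ring
  have c22 : v 2 * w 2 = w 2 * v 2 := by ring
  have c01 : v 0 * w 1 = w 0 * v 1 := by linear_combination -hw0
  have c02 : v 0 * w 2 = w 0 * v 2 := by linear_combination -hw1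
  have c12 : v 1 * w 2 = w 1 * v 2 := by
    have hw2' : v 2 * w 1 = w 2 * v 1 := hw2
    linear_combination -hw2'
  have c10 : v 1 * w 0 = w 1 * v 0 := hw0
  have c20 : v 2 * w 0 = w 2 * v 0 := hw1
  have c21 : v 2 * w 1 = w 2 * v 1 := hw2
  have hall : ∀ a b : Fin 3, v a * w b = w a * v b := by
    intro a b
    fin_cases a <;> fin_cases b <;> assumption
  refine ⟨w j * (v j)⁻¹, ?_⟩
  funext b
  rw [Pi.smul_apply, smul_eq_mul]
  have h1 := hall j b
  field_simp
  linear_combination h1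

lemma card_subtype_comm (hp : p.Prime) :
    Nat.card {x : (Fin 3 → ZMod p) × (Fin 3 → ZMod p) // bb p x.1 x.2 = bb p x.2 x.1} =
      p ^ 3 + (p ^ 3 - 1) * p := by
  classical
  haveI : Fact p.Prime := ⟨hp⟩
  have cardV : Fintype.card (Fin 3 → ZMod p) = p ^ 3 := by
    simp [ZMod.card]
  rw [Nat.card_eq_fintype_card,
    Fintype.card_congr (Equiv.subtypeProdEquivSigmaSubtype
      (fun v w : Fin 3 → ZMod p => bb p v w = bb p w v)),
    Fintype.card_sigma]
  have hval : ∀ v : Fin 3 → ZMod p,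
      Fintype.card {w // bb p v w = bb p w v} = if v = 0 then p ^ 3 else p := by
    intro v
    by_cases hv : v = 0
    · subst hv
      rw [if_pos rfl, ← cardV]
      apply Fintype.card_congr
      apply Equiv.subtypeUnivEquiv
      intro w
      rw [bb_zero_left, bb_zero_right]
    · rw [if_neg hv]
      obtain ⟨j, hj⟩ := Function.ne_iff.mp hv
      have hj' : v j ≠ 0 := by simpa using hj
      have : Fintype.card {w // bb p v w = bb p w v} = Fintype.card (ZMod p) := by
        apply Fintype.card_congr
        symm
        refine Equiv.ofBijective (fun t => ⟨t • v, ?_⟩) ⟨?_, ?_⟩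
        · rw [bb_smul_left, bb_smul_right]
        · intro t t' htt
          have h2 : t • v = t' • v := congrArg Subtype.val htt
          have h3 := congrFun h2 j
          simp only [Pi.smul_apply, smul_eq_mul] at h3
          exact mul_right_cancel₀ hj' h3
        · rintro ⟨w, hw⟩
          obtain ⟨t, rfl⟩ := dep_of_symm hp hv hw
          exact ⟨t, rfl⟩
      rw [this, ZMod.card]
  rw [Finset.sum_congr rfl (fun v _ => hval v)]
  rw [← Finset.sum_erase_add _ _ (Finset.mem_univ (0 : Fin 3 → ZMod p))]
  rw [if_pos rfl]
  have h1 : ∀ v ∈ Finset.univ.erase (0 : Fin 3 → ZMod p),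
      (if v = 0 then p ^ 3 else p) = p := by
    intro v hv
    rw [if_neg (Finset.ne_of_mem_erase hv)]
  rw [Finset.sum_congr rfl h1, Finset.sum_const, Finset.card_erase_of_mem (Finset.mem_univ _),
    Finset.card_univ, cardV, smul_eq_mul]
  ring

lemma card_conj_M (hp : p.Prime) : Nat.card (ConjClasses (M p)) = p ^ 4 + p ^ 3 - p := by
  classical
  haveI : Fact p.Prime := ⟨hp⟩
  haveI : NeZero p := ⟨hp.ne_zero⟩
  haveI : Fintype (M p) := Fintype.ofEquiv _ (M.prodEquiv (p := p)).symm
  have h := card_comm_eq_card_conjClasses_mul_card (M p)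
  have e1 : {q : M p × M p // Commute q.1 q.2} ≃
      {x : (Fin 3 → ZMod p) × (Fin 3 → ZMod p) // bb p x.1 x.2 = bb p x.2 x.1} ×
        ((Fin 3 → ZMod p) × (Fin 3 → ZMod p)) :=
    { toFun := fun q => (⟨(q.1.1.v, q.1.2.v), (commute_iff _ _).1 q.2⟩, (q.1.1.z, q.1.2.z))
      invFun := fun x => ⟨(⟨x.1.1.1, x.2.1⟩, ⟨x.1.1.2, x.2.2⟩), (commute_iff _ _).2 x.1.2⟩
      left_inv := fun q => rfl
      right_inv := fun x => rfl }
  rw [Nat.card_congr e1, Nat.card_prod, Nat.card_prod, card_subtype_comm hp, M.card_M hp] at h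
  have cardV : Nat.card (Fin 3 → ZMod p) = p ^ 3 := by
    simp [Nat.card_eq_fintype_card, ZMod.card]
  rw [cardV] at h
  have hps : 0 < p ^ 6 := pow_pos hp.pos 6
  have key : (p ^ 3 + (p ^ 3 - 1) * p) = Nat.card (ConjClasses (M p)) := by
    apply Nat.eq_of_mul_eq_mul_right hps
    rw [← h]
    ring
  rw [← key]
  have h3 : 1 ≤ p ^ 3 := Nat.one_le_pow _ _ hp.pos
  have h4 : p ≤ p ^ 4 := Nat.le_self_pow (by norm_num) p
  have : (p ^ 3 - 1) * p = p ^ 4 - p := by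
    rw [Nat.sub_mul, one_mul, ← pow_succ]
  rw [this]
  omega

end CC
end G631
namespace G631
section AUT

variable {p : ℕ}

lemma map_cm {G H : Type*} [Group G] [Group H] (f : G →* H) (a b : G) :
    f (cm a b) = cm (f a) (f b) := by
  rw [cm, cm, map_mul, map_mul, map_mul, map_inv, map_inv]

lemma M.z_split (v z : Fin 3 → ZMod p) : (⟨v, z⟩ : M p) = (⟨v, 0⟩ : M p) * ⟨0, z⟩ := by
  rw [M.mul_def]; ext j <;> simp [bb_zero_right]

lemma M.v_split (v w : Fin 3 → ZMod p) :
    (⟨v, 0⟩ : M p) * ⟨w, 0⟩ = (⟨v + w, 0⟩ : M p) * ⟨0, bb p v w⟩ := by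
  rw [M.mul_def, M.mul_def]; ext j <;> simp [bb_zero_right]

lemma M.om_eq_cm (v w z1 z2 : Fin 3 → ZMod p) :
    (⟨0, M.om v w⟩ : M p) = cm (⟨v, z1⟩ : M p) ⟨w, z2⟩ := (M.cm_eq ⟨v, z1⟩ ⟨w, z2⟩).symm

lemma M.z_decomp (z : Fin 3 → ZMod p) :
    (⟨0, z⟩ : M p) =
      (⟨0, M.om (Pi.single 1 (z 0)) (Pi.single 0 1)⟩ : M p) *
      ⟨0, M.om (Pi.single 2 (z 1)) (Pi.single 0 1)⟩ *
      ⟨0, M.om (Pi.single 2 (z 2)) (Pi.single 1 1)⟩ := by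
  rw [M.mul_def, M.mul_def]
  ext j
  · simp
  · fin_cases j <;> simp [M.om, bb, ka, kb, Pi.single_apply] <;> ring

lemma hom_v_z (ψ : M p →* M p) (z : Fin 3 → ZMod p) : (ψ ⟨0, z⟩).v = 0 := by
  rw [M.z_decomp z, map_mul, map_mul, M.om_eq_cm _ _ 0 0, M.om_eq_cm _ _ 0 0,
    M.om_eq_cm _ _ 0 0, map_cm, map_cm, map_cm, M.cm_eq, M.cm_eq, M.cm_eq]
  simp [M.mul_def]

lemma hom_v_hom (ψ : M p →* M p) (v z : Fin 3 → ZMod p) :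
    (ψ ⟨v, z⟩).v = (ψ ⟨v, 0⟩).v := by
  rw [M.z_split, map_mul]
  show ((ψ ⟨v, 0⟩) * (ψ ⟨0, z⟩)).v = _
  rw [M.mul_def]
  simp [hom_v_z]

lemma hom_v_add (ψ : M p →* M p) (v w : Fin 3 → ZMod p) :
    (ψ ⟨v + w, 0⟩).v = (ψ ⟨v, 0⟩).v + (ψ ⟨w, 0⟩).v := by
  have key : ψ ⟨v, 0⟩ * ψ ⟨w, 0⟩ = ψ ⟨v + w, 0⟩ * ψ ⟨0, bb p v w⟩ := by
    rw [← map_mul, ← map_mul, M.v_split]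
  have h := congrArg (fun g : M p => g.v) key
  simp only [M.mul_def, hom_v_z, add_zero] at h
  exact h.symm

/-- the induced linear map on the abelianization -/
def vhom (ψ : M p →* M p) : (Fin 3 → ZMod p) →ₗ[ZMod p] (Fin 3 → ZMod p) :=
  AddMonoidHom.toZModLinearMap p
    (AddMonoidHom.mk' (fun v => (ψ ⟨v, 0⟩).v) (fun v w => hom_v_add ψ v w))

lemma vhom_apply (ψ : M p →* M p) (v : Fin 3 → ZMod p) : vhom ψ v = (ψ ⟨v, 0⟩).v := rfl

lemma vhom_surj (φ : MulAut (M p)) : Function.Surjective (vhom φ.toMonoidHom) := by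
  intro w
  obtain ⟨g, hg⟩ := φ.surjective ⟨w, 0⟩
  obtain ⟨gv, gz⟩ := g
  refine ⟨gv, ?_⟩
  rw [vhom_apply]
  have h2 : (φ.toMonoidHom ⟨gv, 0⟩).v = (φ.toMonoidHom ⟨gv, gz⟩).v :=
    (hom_v_hom φ.toMonoidHom gv gz).symm
  rw [h2]
  show (φ ⟨gv, gz⟩).v = w
  rw [hg]

/-- the matrix of an automorphism -/
noncomputable def matA (φ : MulAut (M p)) : Matrix (Fin 3) (Fin 3) (ZMod p) :=
  LinearMap.toMatrix' (vhom φ.toMonoidHom)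

lemma det_unit (hp : p.Prime) (φ : MulAut (M p)) : IsUnit (matA φ).det := by
  haveI : Fact p.Prime := ⟨hp⟩
  have hs := vhom_surj φ
  have hbij : Function.Bijective (vhom φ.toMonoidHom) :=
    ⟨LinearMap.injective_iff_surjective.mpr hs, hs⟩
  have h1 := LinearEquiv.isUnit_det' (LinearEquiv.ofBijective _ hbij)
  rw [matA, LinearMap.det_toMatrix']
  exact h1

/-- candidate images of generators -/
def gcols (A c : Matrix (Fin 3) (Fin 3) (ZMod p)) (j : Fin 3) : M p :=
  ⟨fun i => A i j, fun i => c i j⟩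

/-- M is generated by the generators -/
lemma closure_genM [NeZero p] (hp : p.Prime) (h5 : 5 ≤ p) : Subgroup.closure (Set.range (genM : Fin 3 → M p)) = ⊤ := by
  have h0 : Set.range (genM : Fin 3 → M p) =
      (eqvP hp h5).toMonoidHom '' Set.range (PresentedGroup.of
        (rels := classTwoRels p 3 (∅ : Set (FreeGroup (Fin 3))))) := by
    rw [← Set.range_comp]
    exact congrArg Set.range (funext fun i => (eqvP_of hp h5 i).symm)
  rw [h0, ← MonoidHom.map_closure, PresentedGroup.closure_range_of]
  exact Subgroup.map_top_of_surjective _ (eqvP hp h5).surjective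

lemma M_hom_ext [NeZero p] (hp : p.Prime) (h5 : 5 ≤ p) {G' : Type*} [Group G'] (ψ ψ' : M p →* G')
    (h : ∀ i, ψ (genM i) = ψ' (genM i)) : ψ = ψ' := by
  apply MonoidHom.eq_of_eqOn_dense (closure_genM hp h5)
  rintro x ⟨i, rfl⟩
  exact h i


variable (hp : p.Prime) (h5 : 5 ≤ p)

/-- endomorphism from data -/
noncomputable def theta [NeZero p] (A c : Matrix (Fin 3) (Fin 3) (ZMod p)) : M p →* M p :=
  (PresentedGroup.toGroup (relsM_any hp h5 (gcols A c))).comp (eqvP hp h5).symm.toMonoidHom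

lemma theta_gen [NeZero p] (A c : Matrix (Fin 3) (Fin 3) (ZMod p)) (i : Fin 3) :
    theta hp h5 A c (genM i) = gcols A c i := by
  have h1 : (eqvP hp h5).symm (genM i) = PresentedGroup.of i := by
    rw [MulEquiv.symm_apply_eq]
    exact (eqvP_of hp h5 i).symm
  show (PresentedGroup.toGroup (relsM_any hp h5 (gcols A c))) ((eqvP hp h5).symm (genM i)) =
    gcols A c i
  rw [h1]
  exact PresentedGroup.toGroup.of _

lemma sub_top [NeZero p] (A : GL (Fin 3) (ZMod p)) (c : Matrix (Fin 3) (Fin 3) (ZMod p))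
    (H : Subgroup (M p)) (hg : ∀ i, gcols (A : Matrix (Fin 3) (Fin 3) (ZMod p)) c i ∈ H) :
    ∀ g : M p, g ∈ H := by
  set Am : Matrix (Fin 3) (Fin 3) (ZMod p) := (A : Matrix (Fin 3) (Fin 3) (ZMod p)) with hAm
  have hv : ∀ u : Fin 3 → ZMod p, ∃ zz, (⟨Am.mulVec u, zz⟩ : M p) ∈ H := by
    intro u
    set prod : M p := gcols Am c 0 ^ (u 0).val * gcols Am c 1 ^ (u 1).val *
      gcols Am c 2 ^ (u 2).val with hprod
    have hmem : prod ∈ H :=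
      mul_mem (mul_mem (pow_mem (hg 0) _) (pow_mem (hg 1) _)) (pow_mem (hg 2) _)
    have hvp : prod.v = Am.mulVec u := by
      rw [hprod]
      funext i
      simp only [M.mul_def, M.pow_eq, Pi.add_apply, Pi.smul_apply, gcols]
      rw [Matrix.mulVec]
      simp only [dotProduct, Fin.sum_univ_three, nsmul_eq_mul]
      push_cast [val_cast]
      ring
    refine ⟨prod.z, ?_⟩
    have : (⟨Am.mulVec u, prod.z⟩ : M p) = prod := by
      apply M.ext
      · exact hvp.symm
      · rfl
    rw [this]
    exact hmem
  have hv' : ∀ v : Fin 3 → ZMod p, ∃ zz, (⟨v, zz⟩ : M p) ∈ H := by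
    intro v
    obtain ⟨zz, h⟩ := hv ((A⁻¹ : GL (Fin 3) (ZMod p)).val.mulVec v)
    rw [Matrix.mulVec_mulVec] at h
    have h1 : Am * (A⁻¹ : GL (Fin 3) (ZMod p)).val = 1 := by
      rw [hAm, ← Units.val_mul, mul_inv_cancel, Units.val_one]
    rw [h1, Matrix.one_mulVec] at h
    exact ⟨zz, h⟩
  have hom_mem : ∀ v w : Fin 3 → ZMod p, (⟨0, M.om v w⟩ : M p) ∈ H := by
    intro v w
    obtain ⟨z1, h1⟩ := hv' v
    obtain ⟨z2, h2⟩ := hv' w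
    have h3 : cm (⟨v, z1⟩ : M p) ⟨w, z2⟩ ∈ H :=
      mul_mem (mul_mem (mul_mem (inv_mem h1) (inv_mem h2)) h1) h2
    have h4 : cm (⟨v, z1⟩ : M p) ⟨w, z2⟩ = ⟨0, M.om v w⟩ := M.cm_eq _ _
    rwa [h4] at h3
  intro g
  obtain ⟨v, z⟩ := g
  obtain ⟨zz, h1⟩ := hv' v
  have h2 : (⟨v, z⟩ : M p) = (⟨v, zz⟩ : M p) * ⟨0, z - zz⟩ := by
    rw [M.mul_def]; ext j <;> simp [bb_zero_right]
  rw [h2]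
  apply mul_mem h1
  rw [M.z_decomp (z - zz)]
  exact mul_mem (mul_mem (hom_mem _ _) (hom_mem _ _)) (hom_mem _ _)

lemma theta_bij [NeZero p] (A : GL (Fin 3) (ZMod p)) (c : Matrix (Fin 3) (Fin 3) (ZMod p)) :
    Function.Bijective (theta hp h5 (A : Matrix (Fin 3) (Fin 3) (ZMod p)) c) := by
  haveI := M.finite_M (p := p) hp
  have hsurj : Function.Surjective (theta hp h5 (A : Matrix (Fin 3) (Fin 3) (ZMod p)) c) := by
    intro g
    have := sub_top A c (theta hp h5 (A : Matrix (Fin 3) (Fin 3) (ZMod p)) c).range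
      (fun i => ⟨genM i, theta_gen hp h5 _ c i⟩) g
    exact this
  exact ⟨Finite.injective_iff_surjective.mpr hsurj, hsurj⟩

/-- automorphism from data -/
noncomputable def autOf [NeZero p] (A : GL (Fin 3) (ZMod p))
    (c : Matrix (Fin 3) (Fin 3) (ZMod p)) : MulAut (M p) :=
  MulEquiv.ofBijective _ (theta_bij hp h5 A c)

lemma autOf_gen [NeZero p] (A : GL (Fin 3) (ZMod p)) (c : Matrix (Fin 3) (Fin 3) (ZMod p))
    (i : Fin 3) : autOf hp h5 A c (genM i) =
      gcols (A : Matrix (Fin 3) (Fin 3) (ZMod p)) c i := theta_gen hp h5 _ c i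

end AUT
end G631
namespace G631
section FIN

variable {p : ℕ}

lemma ifeq_single (j : Fin 3) :
    (fun j' => if j' = j then (1 : ZMod p) else 0) = Pi.single j 1 :=
  funext fun j' => (Pi.single_apply j (1 : ZMod p) j').symm

lemma matA_entry (ψ : MulAut (M p)) (i j : Fin 3) : matA ψ i j = (ψ (genM j)).v i := by
  rw [matA, LinearMap.toMatrix'_apply, vhom_apply]
  rfl

/-- the classification of automorphisms -/
noncomputable def autEquiv [NeZero p] (hp : p.Prime) (h5 : 5 ≤ p) :
    MulAut (M p) ≃ GL (Fin 3) (ZMod p) × Matrix (Fin 3) (Fin 3) (ZMod p) where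
  toFun φ := (Matrix.GeneralLinearGroup.mk'' (matA φ) (det_unit hp φ),
    Matrix.of fun i j => (φ (genM j)).z i)
  invFun Ac := autOf hp h5 Ac.1 Ac.2
  left_inv φ := by
    apply MulEquiv.toMonoidHom_injective
    apply M_hom_ext hp h5
    intro i
    show autOf hp h5 _ _ (genM i) = φ (genM i)
    rw [autOf_gen]
    apply M.ext
    · funext i'
      show matA φ i' i = (φ (genM i)).v i'
      rw [matA_entry]
    · rfl
  right_inv := by
    rintro ⟨A, c⟩
    refine Prod.ext ?_ ?_
    · apply Units.ext
      show matA (autOf hp h5 A c) = (A : Matrix (Fin 3) (Fin 3) (ZMod p))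
      apply Matrix.ext
      intro i j
      rw [matA_entry, autOf_gen]
      rfl
    · show (Matrix.of fun i j => ((autOf hp h5 A c) (genM j)).z i) = c
      apply Matrix.ext
      intro i j
      show ((autOf hp h5 A c) (genM j)).z i = c i j
      rw [autOf_gen]
      rfl

lemma card_matrix33 (hp : p.Prime) : Nat.card (Matrix (Fin 3) (Fin 3) (ZMod p)) = p ^ 9 := by
  haveI : Fact p.Prime := ⟨hp⟩
  have h1 : Nat.card (Matrix (Fin 3) (Fin 3) (ZMod p)) =
      Nat.card (Fin 3 → Fin 3 → ZMod p) := rfl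
  rw [h1, Nat.card_fun, Nat.card_fun]
  have h2 : Nat.card (ZMod p) = p := by
    rw [Nat.card_eq_fintype_card, ZMod.card]
  rw [h2, Nat.card_eq_fintype_card, Fintype.card_fin]
  ring

lemma card_GL3 (hp : p.Prime) : Nat.card (GL (Fin 3) (ZMod p)) = (p ^ 3 - 1) * (p ^ 3 - p) * (p ^ 3 - p ^ 2) := by
  haveI : Fact p.Prime := ⟨hp⟩
  rw [Matrix.card_GL_field, Fin.prod_univ_three]
  simp only [ZMod.card]
  norm_num

lemma card_autM [NeZero p] (hp : p.Prime) (h5 : 5 ≤ p) :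
    Nat.card (MulAut (M p)) = (p ^ 3 - 1) * (p ^ 3 - p) * (p ^ 3 - p ^ 2) * p ^ 9 := by
  rw [Nat.card_congr (autEquiv hp h5), Nat.card_prod, card_GL3 hp, card_matrix33 hp]

/-- conjugacy classes transfer along isomorphisms -/
def conjCongr {G H : Type*} [Group G] [Group H] (e : G ≃* H) :
    ConjClasses G ≃ ConjClasses H where
  toFun := ConjClasses.map e.toMonoidHom
  invFun := ConjClasses.map e.symm.toMonoidHom
  left_inv x := by
    induction x using Quotient.inductionOn' with
    | h a =>
      show ConjClasses.mk (e.symm (e a)) = ConjClasses.mk a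
      rw [MulEquiv.symm_apply_apply]
  right_inv x := by
    induction x using Quotient.inductionOn' with
    | h a =>
      show ConjClasses.mk (e (e.symm a)) = ConjClasses.mk a
      rw [MulEquiv.apply_symm_apply]

end FIN
end G631


theorem group_6_3_1 (p : ℕ) (hp : p.Prime) (h5 : 5 ≤ p) :
    Nat.card (ConjClasses (ClassTwoGroup p 3 (∅ : Set (FreeGroup (Fin 3))))) = p ^ 4 + p ^ 3 - p ∧
    Nat.card (MulAut (ClassTwoGroup p 3 (∅ : Set (FreeGroup (Fin 3))))) = (p ^ 3 - 1) * (p ^ 3 - p) * (p ^ 3 - p ^ 2) * p ^ 9 := by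
  haveI : NeZero p := ⟨hp.ne_zero⟩
  constructor
  · exact (Nat.card_congr (G631.conjCongr (G631.eqvP hp h5))).trans (G631.card_conj_M hp)
  · exact (Nat.card_congr (MulAut.congr (G631.eqvP hp h5)).toEquiv).trans (G631.card_autM hp h5)
end
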